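/- arXiv:1907.04027 — 4 statements merged into one kernel-verified Lean document; each statement's English description precedes it below -/
import Mathlib

section
/- Fix data (y_1,x_1),...,(y_n,x_n) in R x R^d, tau > 0, and beta* in R^d supported on a set S with |S| = s >= 1. Let g in R^d be arbitrary, and set w* = grad L_hat_tau(beta*) - g and b = ||g||_2. Let lambda, r, kappa, eps_1 > 0 satisfy lambda >= b/sqrt(s), r > 2.5 * kappa^{-1} * sqrt(s) * lambda, and lambda >= 2*(||w*||_inf + eps_1). Assume the restricted strong convexity property: for every beta in beta* + B(r) inter C(6*sqrt(s)) with beta != beta*, <grad L_hat_tau(beta) - grad L_hat_tau(beta*), beta - beta*> >= kappa * ||beta - beta*||_2^2. Then every eps_1-optimal solution beta_tilde of min_beta { L_hat_tau(beta) + lambda*||beta||_1 } satisfies ||beta_tilde - beta*||_2 <= 2.5 * kappa^{-1} * sqrt(s) * lambda. -/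
set_option autoImplicit false

open MeasureTheory ProbabilityTheory Filter

noncomputable section

/-- The Huber loss with robustification parameter `τ`. -/
def huber (τ x : ℝ) : ℝ := if |x| ≤ τ then x ^ 2 / 2 else τ * |x| - τ ^ 2 / 2

/-- The derivative of the Huber loss. -/
def huberDeriv (τ x : ℝ) : ℝ := if |x| ≤ τ then x else τ * Real.sign x

/-- Empirical Huber loss `L̂_τ(β) = n⁻¹ ∑ᵢ ℓ_τ(yᵢ - ⟨xᵢ, β⟩)`. -/
def empLoss {n d : ℕ} (y : Fin n → ℝ) (X : Fin n → Fin d → ℝ) (τ : ℝ)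
    (β : Fin d → ℝ) : ℝ :=
  (n : ℝ)⁻¹ * ∑ i, huber τ (y i - ∑ j, X i j * β j)

/-- Gradient of the empirical Huber loss:
`∇L̂_τ(β) = -n⁻¹ ∑ᵢ ℓ'_τ(yᵢ - ⟨xᵢ, β⟩) xᵢ`. -/
def empGrad {n d : ℕ} (y : Fin n → ℝ) (X : Fin n → Fin d → ℝ) (τ : ℝ)
    (β : Fin d → ℝ) : Fin d → ℝ :=
  fun j => -(n : ℝ)⁻¹ * ∑ i, huberDeriv τ (y i - ∑ j', X i j' * β j') * X i j

/-- ℓ¹ norm on `Fin d → ℝ`. -/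
def norm1 {d : ℕ} (v : Fin d → ℝ) : ℝ := ∑ j, |v j|

/-- Euclidean (ℓ²) norm on `Fin d → ℝ`. -/
def norm2 {d : ℕ} (v : Fin d → ℝ) : ℝ := Real.sqrt (∑ j, v j ^ 2)

/-- Sup (ℓ^∞) norm on `Fin d → ℝ`. -/
def normInf {d : ℕ} (v : Fin d → ℝ) : ℝ := ⨆ j, |v j|

/-- The subdifferential of the ℓ¹ norm at `β`. -/
def l1Subdiff {d : ℕ} (β : Fin d → ℝ) : Set (Fin d → ℝ) :=
  {ξ | ∀ j, if β j = 0 then ξ j ∈ Set.Icc (-1 : ℝ) 1 else ξ j = Real.sign (β j)}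

/-- `β` is an `ε`-optimal solution of `min L̂_τ + ‖lam ∘ ·‖₁`:  the suboptimality
measure `ω_lam(β) = min_{ξ ∈ ∂‖β‖₁} ‖∇L̂_τ(β) + lam ∘ ξ‖_∞` is at most `ε`. -/
def IsEpsOptimal {n d : ℕ} (y : Fin n → ℝ) (X : Fin n → Fin d → ℝ) (τ : ℝ)
    (lam : Fin d → ℝ) (ε : ℝ) (β : Fin d → ℝ) : Prop :=
  ∃ ξ ∈ l1Subdiff β, normInf (fun j => empGrad y X τ β j + lam j * ξ j) ≤ ε

set_option maxHeartbeats 1000000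

lemma huberDeriv_eq_clamp {τ : ℝ} (hτ : 0 < τ) (x : ℝ) :
    huberDeriv τ x = max (-τ) (min τ x) := by
  unfold huberDeriv
  rcases le_or_gt |x| τ with h | h
  · rw [if_pos h]
    rw [abs_le] at h
    rw [min_eq_right h.2, max_eq_right h.1]
  · rw [if_neg (not_le.mpr h)]
    rcases lt_abs.mp h with h' | h'
    · rw [Real.sign_of_pos (hτ.trans h'), mul_one, min_eq_left h'.le,
        max_eq_right (by linarith)]
    · have hx : x < -τ := by linarith
      rw [Real.sign_of_neg (by linarith), min_eq_right (by linarith),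
        max_eq_left hx.le]
      ring

lemma huberDeriv_mono {τ : ℝ} (hτ : 0 < τ) : Monotone (huberDeriv τ) := by
  intro a b hab
  rw [huberDeriv_eq_clamp hτ, huberDeriv_eq_clamp hτ]
  exact max_le_max le_rfl (min_le_min le_rfl hab)

lemma grad_mono {n d : ℕ} (y : Fin n → ℝ) (X : Fin n → Fin d → ℝ) {τ : ℝ} (hτ : 0 < τ)
    (a b : Fin d → ℝ) :
    0 ≤ ∑ j, (empGrad y X τ a j - empGrad y X τ b j) * (a j - b j) := by
  have hcalc : ∑ j, (empGrad y X τ a j - empGrad y X τ b j) * (a j - b j)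
      = (n : ℝ)⁻¹ * ∑ i,
          (huberDeriv τ (y i - ∑ j', X i j' * a j')
            - huberDeriv τ (y i - ∑ j', X i j' * b j'))
          * ((y i - ∑ j', X i j' * a j') - (y i - ∑ j', X i j' * b j')) := by
    have h1 : ∀ j, empGrad y X τ a j - empGrad y X τ b j
        = (n : ℝ)⁻¹ * ∑ i, (huberDeriv τ (y i - ∑ j', X i j' * b j')
            - huberDeriv τ (y i - ∑ j', X i j' * a j')) * X i j := by
      intro j
      simp only [empGrad, sub_mul]
      rw [Finset.sum_sub_distrib]
      ring
    calc ∑ j, (empGrad y X τ a j - empGrad y X τ b j) * (a j - b j)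
        = ∑ j, ∑ i, (n : ℝ)⁻¹ * ((huberDeriv τ (y i - ∑ j', X i j' * b j')
            - huberDeriv τ (y i - ∑ j', X i j' * a j')) * (X i j * (a j - b j))) := by
          refine Finset.sum_congr rfl fun j _ => ?_
          rw [h1 j, Finset.mul_sum, Finset.sum_mul]
          refine Finset.sum_congr rfl fun i _ => by ring
      _ = ∑ i, (n : ℝ)⁻¹ * ((huberDeriv τ (y i - ∑ j', X i j' * b j')
            - huberDeriv τ (y i - ∑ j', X i j' * a j'))
            * ∑ j, X i j * (a j - b j)) := by
          rw [Finset.sum_comm]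
          refine Finset.sum_congr rfl fun i _ => ?_
          rw [← Finset.mul_sum, ← Finset.mul_sum]
      _ = _ := by
          rw [Finset.mul_sum]
          refine Finset.sum_congr rfl fun i _ => ?_
          have : ∑ j, X i j * (a j - b j)
              = (∑ j', X i j' * a j') - (∑ j', X i j' * b j') := by
            simp [mul_sub, Finset.sum_sub_distrib]
          rw [this]; ring
  rw [hcalc]
  apply mul_nonneg (by positivity)
  apply Finset.sum_nonneg
  intro i _
  set u := y i - ∑ j', X i j' * a j'
  set v := y i - ∑ j', X i j' * b j'
  rcases le_total v u with h' | h'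
  · exact mul_nonneg (sub_nonneg.2 (huberDeriv_mono hτ h')) (sub_nonneg.2 h')
  · have h0 : (0:ℝ) ≤ (huberDeriv τ v - huberDeriv τ u) * (v - u) :=
      mul_nonneg (sub_nonneg.2 (huberDeriv_mono hτ h')) (sub_nonneg.2 h')
    rw [show (huberDeriv τ u - huberDeriv τ v) * (u - v)
        = (huberDeriv τ v - huberDeriv τ u) * (v - u) by ring]
    exact h0

lemma abs_le_normInf {d : ℕ} (v : Fin d → ℝ) (j : Fin d) : |v j| ≤ normInf v := by
  unfold normInf
  exact le_ciSup (f := fun j => |v j|) (Set.Finite.bddAbove (Set.finite_range _)) j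

lemma norm1_nonneg {d : ℕ} (v : Fin d → ℝ) : 0 ≤ norm1 v :=
  Finset.sum_nonneg fun _ _ => abs_nonneg _

lemma norm2_nonneg {d : ℕ} (v : Fin d → ℝ) : 0 ≤ norm2 v := Real.sqrt_nonneg _

lemma abs_sum_le_normInf_mul_norm1 {d : ℕ} (v w : Fin d → ℝ) :
    |∑ j, v j * w j| ≤ normInf v * norm1 w := by
  calc |∑ j, v j * w j| ≤ ∑ j, |v j * w j| := Finset.abs_sum_le_sum_abs _ _
    _ ≤ ∑ j, normInf v * |w j| := by
        refine Finset.sum_le_sum fun j _ => ?_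
        rw [abs_mul]
        exact mul_le_mul_of_nonneg_right (abs_le_normInf v j) (abs_nonneg _)
    _ = normInf v * norm1 w := by rw [norm1, Finset.mul_sum]

lemma abs_sum_le_norm2_mul_norm2 {d : ℕ} (v w : Fin d → ℝ) :
    |∑ j, v j * w j| ≤ norm2 v * norm2 w := by
  rw [norm2, norm2, ← Real.sqrt_mul (by positivity), ← Real.sqrt_sq_eq_abs]
  exact Real.sqrt_le_sqrt (Finset.sum_mul_sq_le_sq_mul_sq _ _ _)

lemma sum_abs_subset_le {d : ℕ} (S : Finset (Fin d)) (δ : Fin d → ℝ) :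
    ∑ j ∈ S, |δ j| ≤ Real.sqrt S.card * norm2 δ := by
  have h1 : (∑ j ∈ S, |δ j|) ^ 2 ≤ (S.card : ℝ) * ∑ j, δ j ^ 2 := by
    have h := Finset.sum_mul_sq_le_sq_mul_sq S (fun _ => (1 : ℝ)) (fun j => |δ j|)
    have h2 : ∑ j ∈ S, δ j ^ 2 ≤ ∑ j, δ j ^ 2 :=
      Finset.sum_le_sum_of_subset_of_nonneg (Finset.subset_univ S)
        (fun _ _ _ => sq_nonneg _)
    simp only [one_mul, one_pow, sq_abs] at h
    calc (∑ j ∈ S, |δ j|) ^ 2 ≤ (∑ _j ∈ S, (1:ℝ)) * ∑ j ∈ S, δ j ^ 2 := h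
      _ = (S.card : ℝ) * ∑ j ∈ S, δ j ^ 2 := by simp
      _ ≤ (S.card : ℝ) * ∑ j, δ j ^ 2 := mul_le_mul_of_nonneg_left h2 (by positivity)
  calc ∑ j ∈ S, |δ j| = Real.sqrt ((∑ j ∈ S, |δ j|) ^ 2) :=
        (Real.sqrt_sq (Finset.sum_nonneg fun _ _ => abs_nonneg _)).symm
    _ ≤ Real.sqrt ((S.card : ℝ) * ∑ j, δ j ^ 2) := Real.sqrt_le_sqrt h1
    _ = Real.sqrt S.card * norm2 δ := by
        rw [Real.sqrt_mul (by positivity), norm2]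

lemma norm2_smul {d : ℕ} {t : ℝ} (ht : 0 ≤ t) (δ : Fin d → ℝ) :
    norm2 (fun j => t * δ j) = t * norm2 δ := by
  simp only [norm2, mul_pow, ← Finset.mul_sum]
  rw [Real.sqrt_mul (by positivity), Real.sqrt_sq ht]

lemma norm1_smul {d : ℕ} {t : ℝ} (ht : 0 ≤ t) (δ : Fin d → ℝ) :
    norm1 (fun j => t * δ j) = t * norm1 δ := by
  simp [norm1, abs_mul, abs_of_nonneg ht, Finset.mul_sum]

/-- Proposition 2.1: deterministic error bound for any
`ε₁`-optimal solution of the ℓ¹-penalized empirical Huber loss, conditioned on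
restricted strong convexity and a large enough regularization parameter. -/
theorem statement_1 {n d : ℕ} (y : Fin n → ℝ) (X : Fin n → Fin d → ℝ)
    (τ : ℝ) (hτ : 0 < τ)
    (βs : Fin d → ℝ) (S : Finset (Fin d)) (hsupp : ∀ j ∉ S, βs j = 0)
    (s : ℕ) (hcard : S.card = s) (hs : 1 ≤ s)
    (g : Fin d → ℝ)
    (lam r κ ε1 : ℝ) (hlam : 0 < lam) (hr : 0 < r) (hκ : 0 < κ) (hε1 : 0 < ε1)
    (hbias : norm2 g / Real.sqrt s ≤ lam)
    (hrlarge : 2.5 * κ⁻¹ * Real.sqrt s * lam < r)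
    (hlamlarge : 2 * (normInf (fun j => empGrad y X τ βs j - g j) + ε1) ≤ lam)
    (hRSC : ∀ β : Fin d → ℝ, β ≠ βs →
      norm2 (fun j => β j - βs j) ≤ r →
      norm1 (fun j => β j - βs j) ≤ 6 * Real.sqrt s * norm2 (fun j => β j - βs j) →
      κ * (norm2 (fun j => β j - βs j)) ^ 2 ≤
        ∑ j, (empGrad y X τ β j - empGrad y X τ βs j) * (β j - βs j))
    (βt : Fin d → ℝ) (hopt : IsEpsOptimal y X τ (fun _ => lam) ε1 βt) :
    norm2 (fun j => βt j - βs j) ≤ 2.5 * κ⁻¹ * Real.sqrt s * lam := by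
  classical
  obtain ⟨ξ, hξ, hξnorm⟩ := hopt
  simp only [l1Subdiff, Set.mem_setOf_eq] at hξ
  set δ : Fin d → ℝ := fun j => βt j - βs j with hδ
  have hδj : ∀ j, δ j = βt j - βs j := fun j => by rw [hδ]
  have hspos : (0:ℝ) < s := by exact_mod_cast Nat.lt_of_lt_of_le Nat.zero_lt_one hs
  have hs2pos : 0 < Real.sqrt s := Real.sqrt_pos.mpr hspos
  -- ξ facts
  have hξabs : ∀ j, |ξ j| ≤ 1 := by
    intro j
    have hx := hξ j
    by_cases hbt : βt j = 0
    · rw [if_pos hbt] at hx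
      exact abs_le.mpr ⟨hx.1, hx.2⟩
    · rw [if_neg hbt] at hx
      rw [hx]
      rcases lt_or_gt_of_ne hbt with h' | h'
      · rw [Real.sign_of_neg h']; norm_num
      · rw [Real.sign_of_pos h']; norm_num
  -- split of ξ·δ
  have hΞsplit : (∑ j ∈ S, ξ j * δ j) + ∑ j ∈ Sᶜ, ξ j * δ j = ∑ j, ξ j * δ j :=
    Finset.sum_add_sum_compl S _
  have hSbound : -(∑ j ∈ S, |δ j|) ≤ ∑ j ∈ S, ξ j * δ j := by
    rw [← Finset.sum_neg_distrib]
    refine Finset.sum_le_sum fun j _ => ?_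
    have h1 := neg_abs_le (ξ j * δ j)
    have h2 : |ξ j * δ j| ≤ |δ j| := by
      rw [abs_mul]
      calc |ξ j| * |δ j| ≤ 1 * |δ j| :=
            mul_le_mul_of_nonneg_right (hξabs j) (abs_nonneg _)
        _ = |δ j| := one_mul _
    linarith
  have hScbound : ∑ j ∈ Sᶜ, ξ j * δ j = ∑ j ∈ Sᶜ, |δ j| := by
    refine Finset.sum_congr rfl fun j hj => ?_
    have hjS : j ∉ S := Finset.mem_compl.mp hj
    have hb0 : βs j = 0 := hsupp j hjS
    have hδbt : δ j = βt j := by rw [hδj, hb0, sub_zero]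
    have hx := hξ j
    by_cases hbt : βt j = 0
    · rw [hδbt, hbt]; simp
    · rw [if_neg hbt] at hx
      rw [hδbt, hx]
      rcases lt_or_gt_of_ne hbt with h' | h'
      · rw [Real.sign_of_neg h', abs_of_neg h']; ring
      · rw [Real.sign_of_pos h', abs_of_pos h']
        ring
  have hsplit : norm1 δ = (∑ j ∈ S, |δ j|) + ∑ j ∈ Sᶜ, |δ j| := by
    rw [norm1]
    exact (Finset.sum_add_sum_compl S _).symm
  have hn1S : ∑ j ∈ S, |δ j| ≤ Real.sqrt s * norm2 δ := by
    have h := sum_abs_subset_le S δ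
    rwa [hcard] at h
  have hn1snn : 0 ≤ ∑ j ∈ S, |δ j| := Finset.sum_nonneg fun _ _ => abs_nonneg _
  have hn1cnn : 0 ≤ ∑ j ∈ Sᶜ, |δ j| := Finset.sum_nonneg fun _ _ => abs_nonneg _
  -- identity D = A - (lam Ξ + W + G)
  have hident : ∑ j, (empGrad y X τ βt j - empGrad y X τ βs j) * δ j
      = (∑ j, (empGrad y X τ βt j + lam * ξ j) * δ j)
        - (lam * (∑ j, ξ j * δ j)
          + (∑ j, (empGrad y X τ βs j - g j) * δ j) + ∑ j, g j * δ j) := by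
    rw [Finset.mul_sum, ← Finset.sum_add_distrib, ← Finset.sum_add_distrib,
      ← Finset.sum_sub_distrib]
    exact Finset.sum_congr rfl fun j _ => by ring
  -- bounds
  have h0D : 0 ≤ ∑ j, (empGrad y X τ βt j - empGrad y X τ βs j) * δ j := by
    have h := grad_mono y X hτ βt βs
    simp only [hδj]
    exact h
  have hAbound : (∑ j, (empGrad y X τ βt j + lam * ξ j) * δ j) ≤ ε1 * norm1 δ := by
    have h := abs_sum_le_normInf_mul_norm1 (fun j => empGrad y X τ βt j + lam * ξ j) δ
    have h2 : normInf (fun j => empGrad y X τ βt j + lam * ξ j) ≤ ε1 := by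
      simpa using hξnorm
    have h3 := le_abs_self (∑ j, (empGrad y X τ βt j + lam * ξ j) * δ j)
    have h4 := mul_le_mul_of_nonneg_right h2 (norm1_nonneg δ)
    linarith
  have hWbound : -(normInf (fun j => empGrad y X τ βs j - g j) * norm1 δ)
      ≤ ∑ j, (empGrad y X τ βs j - g j) * δ j := by
    have h := abs_sum_le_normInf_mul_norm1 (fun j => empGrad y X τ βs j - g j) δ
    have h1 := neg_abs_le (∑ j, (empGrad y X τ βs j - g j) * δ j)
    linarith
  have hGbound : -(lam * (Real.sqrt s * norm2 δ)) ≤ ∑ j, g j * δ j := by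
    have hg2 : norm2 g ≤ lam * Real.sqrt s := by
      rw [div_le_iff₀ hs2pos] at hbias
      exact hbias
    have h := abs_sum_le_norm2_mul_norm2 g δ
    have h1 := neg_abs_le (∑ j, g j * δ j)
    have h2 := mul_le_mul_of_nonneg_right hg2 (norm2_nonneg δ)
    linarith
  -- half inequality
  have hhalf : (ε1 + normInf (fun j => empGrad y X τ βs j - g j))
      * ((∑ j ∈ S, |δ j|) + ∑ j ∈ Sᶜ, |δ j|)
      ≤ (lam / 2) * ((∑ j ∈ S, |δ j|) + ∑ j ∈ Sᶜ, |δ j|) := by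
    refine mul_le_mul_of_nonneg_right (by linarith) (by linarith)
  rw [hsplit] at hAbound hWbound
  -- cone condition
  have hLΞ : lam * ((∑ j ∈ Sᶜ, |δ j|) - ∑ j ∈ S, |δ j|) ≤ lam * ∑ j, ξ j * δ j := by
    refine mul_le_mul_of_nonneg_left ?_ hlam.le
    linarith
  have hconeL : lam * (∑ j ∈ Sᶜ, |δ j|)
      ≤ lam * (3 * (∑ j ∈ S, |δ j|) + 2 * (Real.sqrt s * norm2 δ)) := by
    linarith [h0D, hident, hAbound, hWbound, hGbound, hhalf, hLΞ]
  have hcone_c : (∑ j ∈ Sᶜ, |δ j|)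
      ≤ 3 * (∑ j ∈ S, |δ j|) + 2 * (Real.sqrt s * norm2 δ) :=
    le_of_mul_le_mul_left hconeL hlam
  have hcone : norm1 δ ≤ 6 * Real.sqrt s * norm2 δ := by
    rw [hsplit]
    linarith [hn1S, hcone_c]
  -- bound on D
  have hlamn1s : lam * (∑ j ∈ S, |δ j|) ≤ lam * (Real.sqrt s * norm2 δ) :=
    mul_le_mul_of_nonneg_left hn1S hlam.le
  have hlamn1c : 0 ≤ lam * ∑ j ∈ Sᶜ, |δ j| := mul_nonneg hlam.le hn1cnn
  have hDb : ∑ j, (empGrad y X τ βt j - empGrad y X τ βs j) * δ j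
      ≤ 2.5 * (lam * (Real.sqrt s * norm2 δ)) := by
    linarith [hident, hAbound, hWbound, hGbound, hhalf, hLΞ, hlamn1s, hlamn1c]
  -- contradiction argument
  by_contra hcon
  push_neg at hcon
  have hrstar_pos : 0 < 2.5 * κ⁻¹ * Real.sqrt s * lam :=
    mul_pos (mul_pos (mul_pos (by norm_num) (inv_pos.mpr hκ)) hs2pos) hlam
  have ht2pos : 0 < norm2 δ := hrstar_pos.trans hcon
  have hδne : ∃ j, δ j ≠ 0 := by
    by_contra hall
    push_neg at hall
    have : norm2 δ = 0 := by simp [norm2, hall]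
    linarith
  set c : ℝ := min ((2.5 * κ⁻¹ * Real.sqrt s * lam + r) / 2)
    ((2.5 * κ⁻¹ * Real.sqrt s * lam + norm2 δ) / 2) with hc
  have hcgt : 2.5 * κ⁻¹ * Real.sqrt s * lam < c := lt_min (by linarith) (by linarith)
  have hcler : c ≤ r := le_trans (min_le_left _ _) (by linarith)
  have hcltt2 : c < norm2 δ := lt_of_le_of_lt (min_le_right _ _) (by linarith)
  have hcpos : 0 < c := hrstar_pos.trans hcgt
  set t : ℝ := c / norm2 δ with ht
  have htpos : 0 < t := div_pos hcpos ht2pos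
  have htlt1 : t < 1 := (div_lt_one ht2pos).mpr hcltt2
  have htt2 : t * norm2 δ = c := div_mul_cancel₀ c (ne_of_gt ht2pos)
  set β' : Fin d → ℝ := fun j => βs j + t * δ j with hβ'
  have hfun : (fun j => β' j - βs j) = fun j => t * δ j := by
    funext j
    simp only [hβ']
    ring
  have hne : β' ≠ βs := by
    obtain ⟨j0, hj0⟩ := hδne
    intro hEq
    have h := congrFun hEq j0
    simp only [hβ'] at h
    have h2 : t * δ j0 = 0 := by linarith
    rcases mul_eq_zero.mp h2 with h3 | h3
    · exact absurd h3 (ne_of_gt htpos)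
    · exact hj0 h3
  have hn2' : norm2 (fun j => β' j - βs j) = c := by
    rw [hfun, norm2_smul htpos.le, htt2]
  have hb1 : norm2 (fun j => β' j - βs j) ≤ r := by rw [hn2']; exact hcler
  have hb2 : norm1 (fun j => β' j - βs j)
      ≤ 6 * Real.sqrt s * norm2 (fun j => β' j - βs j) := by
    rw [hfun, norm1_smul htpos.le, norm2_smul htpos.le]
    calc t * norm1 δ ≤ t * (6 * Real.sqrt s * norm2 δ) :=
          mul_le_mul_of_nonneg_left hcone htpos.le
      _ = 6 * Real.sqrt s * (t * norm2 δ) := by ring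
  have hRSC' := hRSC β' hne hb1 hb2
  rw [hn2'] at hRSC'
  have hsum' : ∑ j, (empGrad y X τ β' j - empGrad y X τ βs j) * (β' j - βs j)
      = t * ∑ j, (empGrad y X τ β' j - empGrad y X τ βs j) * δ j := by
    rw [Finset.mul_sum]
    refine Finset.sum_congr rfl fun j _ => ?_
    simp only [hβ']
    ring
  rw [hsum'] at hRSC'
  -- monotonicity along the segment
  have hmonoline := grad_mono y X hτ βt β'
  have hfactor : ∑ j, (empGrad y X τ βt j - empGrad y X τ β' j) * (βt j - β' j)
      = (1 - t) * ∑ j, (empGrad y X τ βt j - empGrad y X τ β' j) * δ j := by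
    rw [Finset.mul_sum]
    refine Finset.sum_congr rfl fun j _ => ?_
    have hb : βt j - β' j = (1 - t) * δ j := by
      simp only [hβ', hδj]
      ring
    rw [hb]
    ring
  rw [hfactor] at hmonoline
  have hE : 0 ≤ ∑ j, (empGrad y X τ βt j - empGrad y X τ β' j) * δ j := by
    nlinarith [hmonoline, htlt1]
  have hDrel : ∑ j, (empGrad y X τ β' j - empGrad y X τ βs j) * δ j
      ≤ ∑ j, (empGrad y X τ βt j - empGrad y X τ βs j) * δ j := by
    have hsub : (∑ j, (empGrad y X τ βt j - empGrad y X τ βs j) * δ j)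
        - ∑ j, (empGrad y X τ β' j - empGrad y X τ βs j) * δ j
        = ∑ j, (empGrad y X τ βt j - empGrad y X τ β' j) * δ j := by
      rw [← Finset.sum_sub_distrib]
      exact Finset.sum_congr rfl fun j _ => by ring
    linarith
  -- final chain
  have hfinal : κ * c ^ 2 ≤ 2.5 * lam * Real.sqrt s * c := by
    have h1 : t * (∑ j, (empGrad y X τ β' j - empGrad y X τ βs j) * δ j)
        ≤ t * (2.5 * (lam * (Real.sqrt s * norm2 δ))) :=
      mul_le_mul_of_nonneg_left (hDrel.trans hDb) htpos.le
    have h2 : t * (2.5 * (lam * (Real.sqrt s * norm2 δ)))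
        = 2.5 * lam * Real.sqrt s * (t * norm2 δ) := by ring
    rw [h2, htt2] at h1
    linarith
  have hκc : κ * c ≤ 2.5 * lam * Real.sqrt s := by
    have h2 : (κ * c) * c ≤ (2.5 * lam * Real.sqrt s) * c := by linarith [hfinal]
    exact le_of_mul_le_mul_right h2 hcpos
  have hfc : c ≤ 2.5 * κ⁻¹ * Real.sqrt s * lam := by
    rw [← mul_le_mul_iff_right₀ hκ]
    have heq : κ * (2.5 * κ⁻¹ * Real.sqrt s * lam) = 2.5 * lam * Real.sqrt s := by
      field_simp
    rw [heq]
    exact hκc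
  linarith
end
end

section
/- Fix data (y_i,x_i)_{i=1}^n and tau > 0. Let S, E be subsets of {1,...,d} with S contained in E, |E| = k, |S| = s >= 1, and let beta in R^d satisfy beta_j = 0 for j not in S. Let g in R^d; set w = grad L_hat_tau(beta) - g, b = ||g||_2. Let lambda in R^d have nonnegative entries with ||lambda||_inf <= lambda_0 and min_{j not in E} lambda_j >= rho*lambda_0 for some rho in (0,1], and assume lambda_0 >= b/sqrt(s). Let eps > 0 satisfy ||w||_inf + eps <= 0.5*rho*lambda_0, and set l = (2 + 2/rho)*sqrt(k) + (2/rho)*sqrt(s). Then: (i) every eps-optimal solution beta_tilde of min_{beta'} { L_hat_tau(beta') + ||lambda o beta'||_1 } satisfies beta_tilde - beta in C(l). Moreover, if r, kappa > 0 satisfy r > kappa^{-1}*(0.5*rho*sqrt(k) + 2*sqrt(s))*lambda_0 and the restricted strong convexity holds, i.e. for every beta' in beta + B(r) inter C(l) with beta' != beta: <grad L_hat_tau(beta') - grad L_hat_tau(beta), beta' - beta> >= kappa*||beta' - beta||_2^2, then (ii) ||beta_tilde - beta||_2 <= kappa^{-1}*( ||lambda_S||_2 + ||w_E||_2 + sqrt(k)*eps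 + b ) <= kappa^{-1}*(0.5*rho*sqrt(k) + 2*sqrt(s))*lambda_0 < r. -/
set_option autoImplicit false

open MeasureTheory ProbabilityTheory Filter

noncomputable section

namespace Statement11Aux

lemma hd_eq {τ : ℝ} (hτ : 0 < τ) (x : ℝ) : huberDeriv τ x = min τ (max (-τ) x) := by
  unfold huberDeriv
  rcases le_or_gt x 0 with hx | hx
  · rcases le_or_gt (-τ) x with h | h
    · rw [if_pos (by rw [abs_le]; constructor <;> linarith)]
      rw [max_eq_right h, min_eq_right (by linarith)]
    · rw [if_neg (by rw [abs_le]; push_neg; intro; linarith)]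
      rw [max_eq_left (le_of_lt h), min_eq_right (by linarith)]
      rcases lt_or_eq_of_le hx with h0 | h0
      · rw [Real.sign_of_neg h0]; ring
      · subst h0; simp at h; linarith
  · rcases le_or_gt x τ with h | h
    · rw [if_pos (by rw [abs_le]; constructor <;> linarith)]
      rw [max_eq_right (by linarith), min_eq_right h]
    · rw [if_neg (by rw [abs_le]; push_neg; intro; linarith)]
      rw [max_eq_right (by linarith), min_eq_left (le_of_lt h), Real.sign_of_pos hx]; ring

lemma hd_mono {τ : ℝ} (hτ : 0 < τ) : Monotone (huberDeriv τ) := by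
  intro a b hab
  rw [hd_eq hτ, hd_eq hτ]
  exact min_le_min le_rfl (max_le_max le_rfl hab)

lemma hd_two {τ : ℝ} (hτ : 0 < τ) (u v : ℝ) :
    0 ≤ (huberDeriv τ u - huberDeriv τ v) * (u - v) := by
  rcases le_total u v with h | h
  · have := hd_mono hτ h
    nlinarith
  · have := hd_mono hτ h
    exact mul_nonneg (by linarith) (by linarith)

lemma cs {ι : Type*} (A : Finset ι) (f g : ι → ℝ) :
    ∑ j ∈ A, f j * g j ≤ Real.sqrt (∑ j ∈ A, f j ^ 2) * Real.sqrt (∑ j ∈ A, g j ^ 2) := by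
  calc ∑ j ∈ A, f j * g j ≤ |∑ j ∈ A, f j * g j| := le_abs_self _
    _ = Real.sqrt ((∑ j ∈ A, f j * g j) ^ 2) := (Real.sqrt_sq_eq_abs _).symm
    _ ≤ Real.sqrt ((∑ j ∈ A, f j ^ 2) * (∑ j ∈ A, g j ^ 2)) := by
        apply Real.sqrt_le_sqrt
        exact Finset.sum_mul_sq_le_sq_mul_sq A f g
    _ = _ := Real.sqrt_mul (Finset.sum_nonneg fun j _ => sq_nonneg _) _

lemma sum_abs_le {ι : Type*} (A : Finset ι) (v : ι → ℝ) :
    ∑ j ∈ A, |v j| ≤ Real.sqrt A.card * Real.sqrt (∑ j ∈ A, v j ^ 2) := by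
  have h := cs A (fun _ => 1) (fun j => |v j|)
  simpa [sq_abs] using h

lemma grad_inner {n d : ℕ} (y : Fin n → ℝ) (X : Fin n → Fin d → ℝ) (τ : ℝ)
    (β₁ β₂ δ : Fin d → ℝ) :
    ∑ j, (empGrad y X τ β₂ j - empGrad y X τ β₁ j) * δ j
    = (n:ℝ)⁻¹ * ∑ i, (huberDeriv τ (y i - ∑ j, X i j * β₁ j)
        - huberDeriv τ (y i - ∑ j, X i j * β₂ j)) * (∑ j, X i j * δ j) := by
  unfold empGrad
  rw [Finset.mul_sum]
  rw [show ∑ i, (n:ℝ)⁻¹ * ((huberDeriv τ (y i - ∑ j, X i j * β₁ j)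
        - huberDeriv τ (y i - ∑ j, X i j * β₂ j)) * (∑ j, X i j * δ j))
      = ∑ i, ∑ j, (n:ℝ)⁻¹ * ((huberDeriv τ (y i - ∑ j', X i j' * β₁ j')
        - huberDeriv τ (y i - ∑ j', X i j' * β₂ j')) * (X i j * δ j)) from
    Finset.sum_congr rfl fun i _ => by simp [Finset.mul_sum]]
  rw [Finset.sum_comm]
  refine Finset.sum_congr rfl fun j _ => ?_
  simp only [neg_mul, Finset.sum_mul, Finset.mul_sum, sub_mul, mul_sub, Finset.sum_sub_distrib,
    ← Finset.sum_neg_distrib, neg_sub, sub_eq_iff_eq_add]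
  rw [← Finset.sum_sub_distrib, ← Finset.sum_add_distrib]
  exact Finset.sum_congr rfl fun i _ => by ring

lemma grad_mono {n d : ℕ} (y : Fin n → ℝ) (X : Fin n → Fin d → ℝ) {τ : ℝ} (hτ : 0 < τ)
    (β β' : Fin d → ℝ) :
    0 ≤ ∑ j, (empGrad y X τ β' j - empGrad y X τ β j) * (β' j - β j) := by
  rw [grad_inner]
  apply mul_nonneg (by positivity)
  apply Finset.sum_nonneg
  intro i _
  have key : ∑ j, X i j * (β' j - β j)
      = (y i - ∑ j, X i j * β j) - (y i - ∑ j, X i j * β' j) := by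
    simp [mul_sub, Finset.sum_sub_distrib]
  rw [key]
  exact hd_two hτ _ _

lemma grad_ray {n d : ℕ} (y : Fin n → ℝ) (X : Fin n → Fin d → ℝ) {τ : ℝ} (hτ : 0 < τ)
    (β δ : Fin d → ℝ) {t : ℝ} (h0 : 0 ≤ t) (h1 : t ≤ 1) :
    ∑ j, (empGrad y X τ (fun j' => β j' + t * δ j') j - empGrad y X τ β j) * δ j
    ≤ ∑ j, (empGrad y X τ (fun j' => β j' + δ j') j - empGrad y X τ β j) * δ j := by
  rw [grad_inner, grad_inner]
  apply mul_le_mul_of_nonneg_left ?_ (by positivity)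
  apply Finset.sum_le_sum
  intro i _
  have e1 : y i - ∑ j, X i j * (β j + t * δ j)
      = (y i - ∑ j, X i j * β j) - t * (∑ j, X i j * δ j) := by
    simp [mul_add, Finset.sum_add_distrib, Finset.mul_sum]
    rw [show (∑ x, X i x * (t * δ x)) = ∑ x, t * (X i x * δ x) from
      Finset.sum_congr rfl fun _ _ => by ring]
    ring
  have e2 : y i - ∑ j, X i j * (β j + δ j)
      = (y i - ∑ j, X i j * β j) - (∑ j, X i j * δ j) := by
    simp [mul_add, Finset.sum_add_distrib]
    ring
  rw [e1, e2]
  set c := y i - ∑ j, X i j * β j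
  set a := ∑ j, X i j * δ j
  rcases eq_or_lt_of_le h1 with rfl | hlt
  · simp
  · have key := hd_two hτ (c - t*a) (c - a)
    have h2 : (c - t*a) - (c - a) = (1-t)*a := by ring
    rw [h2] at key
    nlinarith [key]

lemma norm2_smul {d : ℕ} {t : ℝ} (ht : 0 ≤ t) (v : Fin d → ℝ) :
    norm2 (fun j => t * v j) = t * norm2 v := by
  simp only [norm2, mul_pow, ← Finset.mul_sum]
  rw [Real.sqrt_mul (sq_nonneg t), Real.sqrt_sq ht]

lemma norm1_smul {d : ℕ} {t : ℝ} (ht : 0 ≤ t) (v : Fin d → ℝ) :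
    norm1 (fun j => t * v j) = t * norm1 v := by
  simp only [norm1, abs_mul, abs_of_nonneg ht, ← Finset.mul_sum]

end Statement11Aux

open Statement11Aux in
set_option maxHeartbeats 2000000 in

/-- Lemma A.3: (i) cone constraint and (ii) ℓ²-error bound for
`ε`-optimal solutions of the weighted ℓ¹-penalized empirical Huber loss. -/
theorem statement_11 {n d : ℕ} (y : Fin n → ℝ) (X : Fin n → Fin d → ℝ)
    (τ : ℝ) (hτ : 0 < τ)
    (S E : Finset (Fin d)) (hSE : S ⊆ E) (k s : ℕ)
    (hk : E.card = k) (hcard : S.card = s) (hs : 1 ≤ s)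
    (β : Fin d → ℝ) (hβ : ∀ j ∉ S, β j = 0)
    (g : Fin d → ℝ)
    (lam : Fin d → ℝ) (hlamnn : ∀ j, 0 ≤ lam j)
    (lam0 ρ : ℝ) (hρ : 0 < ρ) (hρ1 : ρ ≤ 1)
    (hlamsup : normInf lam ≤ lam0)
    (hlammin : ρ * lam0 ≤ ⨅ j : {j : Fin d // j ∉ E}, lam (j : Fin d))
    (hbias : norm2 g / Real.sqrt s ≤ lam0)
    (ε : ℝ) (hε : 0 < ε)
    (hεsmall : normInf (fun j' => empGrad y X τ β j' - g j') + ε ≤ 0.5 * ρ * lam0) :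
    (∀ βt : Fin d → ℝ, IsEpsOptimal y X τ lam ε βt →
      norm1 (fun j => βt j - β j) ≤
        ((2 + 2 / ρ) * Real.sqrt k + (2 / ρ) * Real.sqrt s) *
          norm2 (fun j => βt j - β j)) ∧
    (∀ r κ : ℝ, 0 < κ →
      κ⁻¹ * (0.5 * ρ * Real.sqrt k + 2 * Real.sqrt s) * lam0 < r →
      (∀ β' : Fin d → ℝ, β' ≠ β →
        norm2 (fun j => β' j - β j) ≤ r →
        norm1 (fun j => β' j - β j) ≤
          ((2 + 2 / ρ) * Real.sqrt k + (2 / ρ) * Real.sqrt s) *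
            norm2 (fun j => β' j - β j) →
        κ * (norm2 (fun j => β' j - β j)) ^ 2 ≤
          ∑ j, (empGrad y X τ β' j - empGrad y X τ β j) * (β' j - β j)) →
      ∀ βt : Fin d → ℝ, IsEpsOptimal y X τ lam ε βt →
        norm2 (fun j => βt j - β j) ≤
            κ⁻¹ * (Real.sqrt (∑ j ∈ S, lam j ^ 2) +
              Real.sqrt (∑ j ∈ E, (empGrad y X τ β j - g j) ^ 2) +
              Real.sqrt k * ε + norm2 g) ∧
          κ⁻¹ * (Real.sqrt (∑ j ∈ S, lam j ^ 2) +
              Real.sqrt (∑ j ∈ E, (empGrad y X τ β j - g j) ^ 2) +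
              Real.sqrt k * ε + norm2 g) ≤
            κ⁻¹ * (0.5 * ρ * Real.sqrt k + 2 * Real.sqrt s) * lam0 ∧
          κ⁻¹ * (0.5 * ρ * Real.sqrt k + 2 * Real.sqrt s) * lam0 < r) := by
  classical
  obtain ⟨j₀, hj₀⟩ := Finset.card_pos.mp (show 0 < S.card by rw [hcard]; omega)
  haveI : Nonempty (Fin d) := ⟨j₀⟩
  have habs_le : ∀ (v : Fin d → ℝ) (j : Fin d), |v j| ≤ normInf v := fun v j => by
    simp only [normInf]
    exact le_ciSup (Set.Finite.bddAbove (Set.finite_range fun j => |v j|)) j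
  set W := normInf (fun j' => empGrad y X τ β j' - g j') with hWdef
  have hW0 : 0 ≤ W := by
    rw [hWdef]
    exact le_trans (abs_nonneg _) (habs_le (fun j' => empGrad y X τ β j' - g j') j₀)
  have hlam0 : 0 < lam0 := by nlinarith [hεsmall, hW0, hε, hρ]
  have hlamle : ∀ j, lam j ≤ lam0 := fun j =>
    le_trans (le_trans (le_abs_self _) (habs_le lam j)) hlamsup
  have hlamlow : ∀ j, j ∉ E → ρ * lam0 ≤ lam j := by
    intro j hj
    refine le_trans hlammin (ciInf_le ⟨0, ?_⟩ (⟨j, hj⟩ : {j : Fin d // j ∉ E}))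
    rintro x ⟨j', rfl⟩
    exact hlamnn _
  have hwabs : ∀ j, |empGrad y X τ β j - g j| ≤ W := fun j => by
    rw [hWdef]
    exact habs_le (fun j' => empGrad y X τ β j' - g j') j
  have hsqs : (1:ℝ) ≤ Real.sqrt s := by
    rw [show (1:ℝ) = Real.sqrt 1 by simp]
    exact Real.sqrt_le_sqrt (by exact_mod_cast hs)
  have hsqs0 : 0 < Real.sqrt s := lt_of_lt_of_le one_pos hsqs
  have hb_le : norm2 g ≤ Real.sqrt s * lam0 := by
    rw [mul_comm]; exact (div_le_iff₀ hsqs0).mp hbias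
  have hρ0 : ρ ≠ 0 := ne_of_gt hρ
  -- PART (i): cone constraint
  have hcone : ∀ βt : Fin d → ℝ, IsEpsOptimal y X τ lam ε βt →
      norm1 (fun j => βt j - β j) ≤
        ((2 + 2 / ρ) * Real.sqrt k + (2 / ρ) * Real.sqrt s) *
          norm2 (fun j => βt j - β j) := by
    rintro βt ⟨ξ, hξ, hu⟩
    simp only [l1Subdiff, Set.mem_setOf_eq] at hξ
    have hu' : ∀ j, |empGrad y X τ βt j + lam j * ξ j| ≤ ε := fun j =>
      le_trans (habs_le (fun j' => empGrad y X τ βt j' + lam j' * ξ j') j) hu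
    have hξ1 : ∀ j, |ξ j| ≤ 1 := by
      intro j
      have h := hξ j
      by_cases hb : βt j = 0
      · rw [if_pos hb] at h; exact abs_le.mpr ⟨h.1, h.2⟩
      · rw [if_neg hb] at h; rw [h]
        rcases lt_trichotomy (βt j) 0 with h1 | h1 | h1
        · rw [Real.sign_of_neg h1]; norm_num
        · exact absurd h1 hb
        · rw [Real.sign_of_pos h1]; norm_num
    have hsgn : ∀ j, β j = 0 → ξ j * (βt j - β j) = |βt j - β j| := by
      intro j hb0
      rw [hb0, sub_zero]
      by_cases h : βt j = 0
      · simp [h]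
      · have h2 := hξ j; rw [if_neg h] at h2
        rw [h2]
        rcases lt_trichotomy (βt j) 0 with h1 | h1 | h1
        · rw [Real.sign_of_neg h1, abs_of_neg h1]; ring
        · exact absurd h1 h
        · rw [Real.sign_of_pos h1, abs_of_pos h1]; ring
    have hN0 : 0 ≤ norm2 (fun j => βt j - β j) := Real.sqrt_nonneg _
    have hA0 : 0 ≤ ∑ j ∈ Eᶜ, |βt j - β j| := Finset.sum_nonneg fun _ _ => abs_nonneg _
    have hB0 : 0 ≤ ∑ j ∈ E, |βt j - β j| := Finset.sum_nonneg fun _ _ => abs_nonneg _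
    have hN10 : 0 ≤ norm1 (fun j => βt j - β j) := Finset.sum_nonneg fun _ _ => abs_nonneg _
    have ha : ρ * lam0 * (∑ j ∈ Eᶜ, |βt j - β j|) ≤
        ∑ j ∈ Eᶜ, lam j * ξ j * (βt j - β j) := by
      rw [Finset.mul_sum]
      apply Finset.sum_le_sum
      intro j hj
      have hjE : j ∉ E := by simpa using hj
      rw [mul_assoc (lam j), hsgn j (hβ j fun hjS => hjE (hSE hjS))]
      exact mul_le_mul_of_nonneg_right (hlamlow j hjE) (abs_nonneg _)
    have hb' : -(lam0 * ∑ j ∈ E, |βt j - β j|) ≤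
        ∑ j ∈ E, lam j * ξ j * (βt j - β j) := by
      rw [Finset.mul_sum, ← Finset.sum_neg_distrib]
      apply Finset.sum_le_sum
      intro j _
      have h1 : |lam j * ξ j * (βt j - β j)| ≤ lam0 * |βt j - β j| := by
        rw [abs_mul, abs_mul, abs_of_nonneg (hlamnn j)]
        calc lam j * |ξ j| * |βt j - β j| ≤ lam0 * 1 * |βt j - β j| := by
              apply mul_le_mul_of_nonneg_right _ (abs_nonneg _)
              exact mul_le_mul (hlamle j) (hξ1 j) (abs_nonneg _) (le_of_lt hlam0)
          _ = lam0 * |βt j - β j| := by ring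
      linarith [neg_abs_le (lam j * ξ j * (βt j - β j))]
    have hsplit : ∑ j ∈ Eᶜ, lam j * ξ j * (βt j - β j)
        + ∑ j ∈ E, lam j * ξ j * (βt j - β j)
        = ∑ j, lam j * ξ j * (βt j - β j) := Finset.sum_compl_add_sum E _
    have hup : ∑ j, lam j * ξ j * (βt j - β j)
        ≤ (ε + W) * norm1 (fun j => βt j - β j) + norm2 g * norm2 (fun j => βt j - β j) := by
      have h1 : ∑ j, lam j * ξ j * (βt j - β j)
          = ∑ j, (empGrad y X τ βt j + lam j * ξ j) * (βt j - β j)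
            - ∑ j, empGrad y X τ βt j * (βt j - β j) := by
        rw [← Finset.sum_sub_distrib]; exact Finset.sum_congr rfl fun j _ => by ring
      have h3 : ∑ j, (empGrad y X τ βt j - empGrad y X τ β j) * (βt j - β j)
          = ∑ j, empGrad y X τ βt j * (βt j - β j)
            - ∑ j, empGrad y X τ β j * (βt j - β j) := by
        rw [← Finset.sum_sub_distrib]; exact Finset.sum_congr rfl fun j _ => by ring
      have h2 := Statement11Aux.grad_mono y X hτ β βt
      have h4 : ∑ j, (empGrad y X τ βt j + lam j * ξ j) * (βt j - β j)
          ≤ ε * norm1 (fun j => βt j - β j) := by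
        rw [norm1, Finset.mul_sum]
        apply Finset.sum_le_sum; intro j _
        calc (empGrad y X τ βt j + lam j * ξ j) * (βt j - β j)
            ≤ |(empGrad y X τ βt j + lam j * ξ j) * (βt j - β j)| := le_abs_self _
          _ = |empGrad y X τ βt j + lam j * ξ j| * |βt j - β j| := abs_mul _ _
          _ ≤ ε * |βt j - β j| := mul_le_mul_of_nonneg_right (hu' j) (abs_nonneg _)
      have h6 : ∑ j, empGrad y X τ β j * (βt j - β j)
          = ∑ j, (empGrad y X τ β j - g j) * (βt j - β j) + ∑ j, g j * (βt j - β j) := by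
        rw [← Finset.sum_add_distrib]; exact Finset.sum_congr rfl fun j _ => by ring
      have h7 : -(W * norm1 (fun j => βt j - β j))
          ≤ ∑ j, (empGrad y X τ β j - g j) * (βt j - β j) := by
        rw [norm1, Finset.mul_sum, ← Finset.sum_neg_distrib]
        apply Finset.sum_le_sum; intro j _
        have h8 : |(empGrad y X τ β j - g j) * (βt j - β j)| ≤ W * |βt j - β j| := by
          rw [abs_mul]; exact mul_le_mul_of_nonneg_right (hwabs j) (abs_nonneg _)
        linarith [neg_abs_le ((empGrad y X τ β j - g j) * (βt j - β j))]
      have h9 : -(norm2 g * norm2 (fun j => βt j - β j)) ≤ ∑ j, g j * (βt j - β j) := by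
        have hcs := Statement11Aux.cs Finset.univ (fun j => -g j) (fun j => βt j - β j)
        simp only [neg_sq] at hcs
        have he : ∑ j, -g j * (βt j - β j) = -∑ j, g j * (βt j - β j) := by
          rw [← Finset.sum_neg_distrib]; exact Finset.sum_congr rfl fun j _ => by ring
        rw [he] at hcs
        simp only [norm2]
        linarith [hcs]
      linarith [h1, h2, h3, h4, h6, h7, h9]
    have hAB : ∑ j ∈ Eᶜ, |βt j - β j| + ∑ j ∈ E, |βt j - β j|
        = norm1 (fun j => βt j - β j) := by
      rw [norm1]; exact Finset.sum_compl_add_sum E _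
    have hBk : ∑ j ∈ E, |βt j - β j| ≤ Real.sqrt k * norm2 (fun j => βt j - β j) := by
      calc ∑ j ∈ E, |βt j - β j|
          ≤ Real.sqrt E.card * Real.sqrt (∑ j ∈ E, (βt j - β j)^2) :=
            Statement11Aux.sum_abs_le E _
        _ ≤ Real.sqrt k * norm2 (fun j => βt j - β j) := by
            rw [hk]
            apply mul_le_mul_of_nonneg_left _ (Real.sqrt_nonneg _)
            simp only [norm2]
            apply Real.sqrt_le_sqrt
            exact Finset.sum_le_sum_of_subset_of_nonneg (Finset.subset_univ E)
              fun j _ _ => sq_nonneg _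
    -- arithmetic
    have h11 : (ε + W) * norm1 (fun j => βt j - β j)
        ≤ (0.5 * ρ * lam0) * norm1 (fun j => βt j - β j) :=
      mul_le_mul_of_nonneg_right (by linarith [hεsmall]) hN10
    have h12 : norm2 g * norm2 (fun j => βt j - β j)
        ≤ (Real.sqrt s * lam0) * norm2 (fun j => βt j - β j) :=
      mul_le_mul_of_nonneg_right hb_le hN0
    have h13 : ρ * lam0 * norm1 (fun j => βt j - β j)
        = ρ * lam0 * (∑ j ∈ Eᶜ, |βt j - β j|) + ρ * lam0 * (∑ j ∈ E, |βt j - β j|) := by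
      rw [← hAB]; ring
    have h14 : 0.5 * (ρ * lam0 * (∑ j ∈ Eᶜ, |βt j - β j|))
        ≤ (0.5 * (ρ * lam0) + lam0) * (∑ j ∈ E, |βt j - β j|)
          + Real.sqrt s * lam0 * norm2 (fun j => βt j - β j) := by
      nlinarith [ha, hb', hsplit, hup, h11, h12, h13]
    have h15 : lam0 * (0.5 * ρ * (∑ j ∈ Eᶜ, |βt j - β j|))
        ≤ lam0 * ((0.5 * ρ + 1) * (∑ j ∈ E, |βt j - β j|)
          + Real.sqrt s * norm2 (fun j => βt j - β j)) := by
      nlinarith [h14]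
    have h16 : 0.5 * ρ * (∑ j ∈ Eᶜ, |βt j - β j|)
        ≤ (0.5 * ρ + 1) * (∑ j ∈ E, |βt j - β j|)
          + Real.sqrt s * norm2 (fun j => βt j - β j) :=
      le_of_mul_le_mul_left h15 hlam0
    have h17 : (2*ρ+2) * (∑ j ∈ E, |βt j - β j|)
        ≤ (2*ρ+2) * (Real.sqrt k * norm2 (fun j => βt j - β j)) :=
      mul_le_mul_of_nonneg_left hBk (by linarith)
    have h18 : ρ * norm1 (fun j => βt j - β j)
        ≤ ρ * (((2 + 2 / ρ) * Real.sqrt k + (2 / ρ) * Real.sqrt s) *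
            norm2 (fun j => βt j - β j)) := by
      have hexp : ρ * (((2 + 2 / ρ) * Real.sqrt k + (2 / ρ) * Real.sqrt s) *
          norm2 (fun j => βt j - β j))
          = (2*ρ+2) * (Real.sqrt k * norm2 (fun j => βt j - β j))
            + 2 * (Real.sqrt s * norm2 (fun j => βt j - β j)) := by
        field_simp
      rw [hexp]
      have h19 : ρ * norm1 (fun j => βt j - β j)
          = ρ * (∑ j ∈ Eᶜ, |βt j - β j|) + ρ * (∑ j ∈ E, |βt j - β j|) := by
        rw [← hAB]; ring
      nlinarith [h16, h17, h19]
    exact le_of_mul_le_mul_left h18 hρ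
  refine ⟨hcone, ?_⟩
  -- PART (ii)
  intro r κ hκ hr hRSC
  have hκinv : (0:ℝ) ≤ κ⁻¹ := inv_nonneg.mpr hκ.le
  -- second inequality (independent of βt)
  have hlamS : Real.sqrt (∑ j ∈ S, lam j ^ 2) ≤ Real.sqrt s * lam0 := by
    rw [show Real.sqrt s * lam0 = Real.sqrt (s * lam0^2) by
      rw [Real.sqrt_mul (Nat.cast_nonneg s), Real.sqrt_sq hlam0.le]]
    apply Real.sqrt_le_sqrt
    calc ∑ j ∈ S, lam j ^ 2 ≤ ∑ j ∈ S, lam0 ^ 2 :=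
          Finset.sum_le_sum fun j _ => pow_le_pow_left₀ (hlamnn j) (hlamle j) 2
      _ = S.card * lam0 ^ 2 := by rw [Finset.sum_const, nsmul_eq_mul]
      _ = s * lam0 ^ 2 := by rw [hcard]
  have hWE : Real.sqrt (∑ j ∈ E, (empGrad y X τ β j - g j) ^ 2) ≤ Real.sqrt k * W := by
    rw [show Real.sqrt k * W = Real.sqrt (k * W^2) by
      rw [Real.sqrt_mul (Nat.cast_nonneg k), Real.sqrt_sq hW0]]
    apply Real.sqrt_le_sqrt
    calc ∑ j ∈ E, (empGrad y X τ β j - g j) ^ 2 ≤ ∑ j ∈ E, W ^ 2 :=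
          Finset.sum_le_sum fun j _ => by
            rw [← sq_abs]; exact pow_le_pow_left₀ (abs_nonneg _) (hwabs j) 2
      _ = E.card * W ^ 2 := by rw [Finset.sum_const, nsmul_eq_mul]
      _ = k * W ^ 2 := by rw [hk]
  have hkWε : Real.sqrt k * W + Real.sqrt k * ε ≤ Real.sqrt k * (0.5 * ρ * lam0) := by
    have := mul_le_mul_of_nonneg_left hεsmall (Real.sqrt_nonneg (k:ℝ))
    nlinarith [this]
  have hU0 : 0 ≤ Real.sqrt (∑ j ∈ S, lam j ^ 2)
      + Real.sqrt (∑ j ∈ E, (empGrad y X τ β j - g j) ^ 2)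
      + Real.sqrt k * ε + norm2 g := by
    have := Real.sqrt_nonneg (∑ j ∈ S, lam j ^ 2)
    have := Real.sqrt_nonneg (∑ j ∈ E, (empGrad y X τ β j - g j) ^ 2)
    have := Real.sqrt_nonneg ((k:ℕ) : ℝ)
    have := Real.sqrt_nonneg (∑ j, g j ^ 2)
    have hbn : (0:ℝ) ≤ norm2 g := Real.sqrt_nonneg _
    nlinarith [hε, Real.sqrt_nonneg ((k:ℕ) : ℝ)]
  have hUle : Real.sqrt (∑ j ∈ S, lam j ^ 2)
      + Real.sqrt (∑ j ∈ E, (empGrad y X τ β j - g j) ^ 2)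
      + Real.sqrt k * ε + norm2 g ≤ (0.5 * ρ * Real.sqrt k + 2 * Real.sqrt s) * lam0 := by
    nlinarith [hlamS, hWE, hkWε, hb_le]
  have hmid : κ⁻¹ * (Real.sqrt (∑ j ∈ S, lam j ^ 2)
      + Real.sqrt (∑ j ∈ E, (empGrad y X τ β j - g j) ^ 2)
      + Real.sqrt k * ε + norm2 g)
      ≤ κ⁻¹ * (0.5 * ρ * Real.sqrt k + 2 * Real.sqrt s) * lam0 := by
    rw [mul_assoc]
    exact mul_le_mul_of_nonneg_left hUle hκinv
  intro βt hopt
  refine ⟨?_, hmid, hr⟩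
  have hconeδ := hcone βt hopt
  obtain ⟨ξ, hξ, hu⟩ := hopt
  simp only [l1Subdiff, Set.mem_setOf_eq] at hξ
  have hu' : ∀ j, |empGrad y X τ βt j + lam j * ξ j| ≤ ε := fun j =>
    le_trans (habs_le (fun j' => empGrad y X τ βt j' + lam j' * ξ j') j) hu
  have hξ1 : ∀ j, |ξ j| ≤ 1 := by
    intro j
    have h := hξ j
    by_cases hb : βt j = 0
    · rw [if_pos hb] at h; exact abs_le.mpr ⟨h.1, h.2⟩
    · rw [if_neg hb] at h; rw [h]
      rcases lt_trichotomy (βt j) 0 with h1 | h1 | h1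
      · rw [Real.sign_of_neg h1]; norm_num
      · exact absurd h1 hb
      · rw [Real.sign_of_pos h1]; norm_num
  have hsgn : ∀ j, β j = 0 → ξ j * (βt j - β j) = |βt j - β j| := by
    intro j hb0
    rw [hb0, sub_zero]
    by_cases h : βt j = 0
    · simp [h]
    · have h2 := hξ j; rw [if_neg h] at h2
      rw [h2]
      rcases lt_trichotomy (βt j) 0 with h1 | h1 | h1
      · rw [Real.sign_of_neg h1, abs_of_neg h1]; ring
      · exact absurd h1 h
      · rw [Real.sign_of_pos h1, abs_of_pos h1]; ring
  have hN0 : 0 ≤ norm2 (fun j => βt j - β j) := Real.sqrt_nonneg _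
  have hsubE : Real.sqrt (∑ j ∈ E, (βt j - β j)^2) ≤ norm2 (fun j => βt j - β j) := by
    simp only [norm2]
    exact Real.sqrt_le_sqrt (Finset.sum_le_sum_of_subset_of_nonneg (Finset.subset_univ E)
      fun j _ _ => sq_nonneg _)
  have hsubS : Real.sqrt (∑ j ∈ S, (βt j - β j)^2) ≤ norm2 (fun j => βt j - β j) := by
    simp only [norm2]
    exact Real.sqrt_le_sqrt (Finset.sum_le_sum_of_subset_of_nonneg (Finset.subset_univ S)
      fun j _ _ => sq_nonneg _)
  -- T-bound
  have hT : ∑ j, (empGrad y X τ βt j - empGrad y X τ β j) * (βt j - β j)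
      ≤ (Real.sqrt (∑ j ∈ S, lam j ^ 2)
        + Real.sqrt (∑ j ∈ E, (empGrad y X τ β j - g j) ^ 2)
        + Real.sqrt k * ε + norm2 g) * norm2 (fun j => βt j - β j) := by
    have hTeq : ∑ j, (empGrad y X τ βt j - empGrad y X τ β j) * (βt j - β j)
        = (∑ j, ((empGrad y X τ βt j + lam j * ξ j) - lam j * ξ j
            - (empGrad y X τ β j - g j)) * (βt j - β j))
          + ∑ j, (-g j) * (βt j - β j) := by
      rw [← Finset.sum_add_distrib]; exact Finset.sum_congr rfl fun j _ => by ring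
    have hPsplit : ∑ j ∈ Eᶜ, ((empGrad y X τ βt j + lam j * ξ j) - lam j * ξ j
            - (empGrad y X τ β j - g j)) * (βt j - β j)
        + ∑ j ∈ E, ((empGrad y X τ βt j + lam j * ξ j) - lam j * ξ j
            - (empGrad y X τ β j - g j)) * (βt j - β j)
        = ∑ j, ((empGrad y X τ βt j + lam j * ξ j) - lam j * ξ j
            - (empGrad y X τ β j - g j)) * (βt j - β j) := Finset.sum_compl_add_sum E _
    have hEc : ∑ j ∈ Eᶜ, ((empGrad y X τ βt j + lam j * ξ j) - lam j * ξ j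
            - (empGrad y X τ β j - g j)) * (βt j - β j) ≤ 0 := by
      apply Finset.sum_nonpos
      intro j hj
      have hjE : j ∉ E := by simpa using hj
      have hb0 : β j = 0 := hβ j fun hjS => hjE (hSE hjS)
      have h1 : (empGrad y X τ βt j + lam j * ξ j) * (βt j - β j) ≤ ε * |βt j - β j| := by
        calc _ ≤ |(empGrad y X τ βt j + lam j * ξ j) * (βt j - β j)| := le_abs_self _
          _ = |empGrad y X τ βt j + lam j * ξ j| * |βt j - β j| := abs_mul _ _
          _ ≤ ε * |βt j - β j| := mul_le_mul_of_nonneg_right (hu' j) (abs_nonneg _)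
      have h2 : -((empGrad y X τ β j - g j) * (βt j - β j)) ≤ W * |βt j - β j| := by
        have h8 : |(empGrad y X τ β j - g j) * (βt j - β j)| ≤ W * |βt j - β j| := by
          rw [abs_mul]; exact mul_le_mul_of_nonneg_right (hwabs j) (abs_nonneg _)
        linarith [neg_abs_le ((empGrad y X τ β j - g j) * (βt j - β j))]
      have h3 : ρ * lam0 * |βt j - β j| ≤ lam j * (ξ j * (βt j - β j)) := by
        rw [hsgn j hb0]
        exact mul_le_mul_of_nonneg_right (hlamlow j hjE) (abs_nonneg _)
      have h4 : (ε + W) * |βt j - β j| ≤ (0.5 * ρ * lam0) * |βt j - β j| :=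
        mul_le_mul_of_nonneg_right (by linarith [hεsmall]) (abs_nonneg _)
      have h5 : (0.5 * ρ * lam0) * |βt j - β j| ≤ ρ * lam0 * |βt j - β j| := by
        nlinarith [abs_nonneg (βt j - β j), mul_pos hρ hlam0]
      nlinarith [h1, h2, h3, h4, h5]
    have hEdec : ∑ j ∈ E, ((empGrad y X τ βt j + lam j * ξ j) - lam j * ξ j
            - (empGrad y X τ β j - g j)) * (βt j - β j)
        = ∑ j ∈ E, (empGrad y X τ βt j + lam j * ξ j) * (βt j - β j)
          - ∑ j ∈ E, lam j * ξ j * (βt j - β j)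
          - ∑ j ∈ E, (empGrad y X τ β j - g j) * (βt j - β j) := by
      rw [← Finset.sum_sub_distrib, ← Finset.sum_sub_distrib]
      exact Finset.sum_congr rfl fun j _ => by ring
    have hE1 : ∑ j ∈ E, (empGrad y X τ βt j + lam j * ξ j) * (βt j - β j)
        ≤ Real.sqrt k * ε * norm2 (fun j => βt j - β j) := by
      have hstep : ∑ j ∈ E, (empGrad y X τ βt j + lam j * ξ j) * (βt j - β j)
          ≤ ε * ∑ j ∈ E, |βt j - β j| := by
        rw [Finset.mul_sum]
        apply Finset.sum_le_sum; intro j _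
        calc _ ≤ |(empGrad y X τ βt j + lam j * ξ j) * (βt j - β j)| := le_abs_self _
          _ = |empGrad y X τ βt j + lam j * ξ j| * |βt j - β j| := abs_mul _ _
          _ ≤ ε * |βt j - β j| := mul_le_mul_of_nonneg_right (hu' j) (abs_nonneg _)
      have hstep2 : ∑ j ∈ E, |βt j - β j| ≤ Real.sqrt k * norm2 (fun j => βt j - β j) := by
        calc ∑ j ∈ E, |βt j - β j|
            ≤ Real.sqrt E.card * Real.sqrt (∑ j ∈ E, (βt j - β j)^2) :=
              Statement11Aux.sum_abs_le E _
          _ ≤ Real.sqrt k * norm2 (fun j => βt j - β j) := by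
              rw [hk]
              exact mul_le_mul_of_nonneg_left hsubE (Real.sqrt_nonneg _)
      calc ∑ j ∈ E, (empGrad y X τ βt j + lam j * ξ j) * (βt j - β j)
          ≤ ε * ∑ j ∈ E, |βt j - β j| := hstep
        _ ≤ ε * (Real.sqrt k * norm2 (fun j => βt j - β j)) :=
            mul_le_mul_of_nonneg_left hstep2 hε.le
        _ = Real.sqrt k * ε * norm2 (fun j => βt j - β j) := by ring
    have hE2 : -∑ j ∈ E, (empGrad y X τ β j - g j) * (βt j - β j)
        ≤ Real.sqrt (∑ j ∈ E, (empGrad y X τ β j - g j) ^ 2)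
          * norm2 (fun j => βt j - β j) := by
      have hcs := Statement11Aux.cs E (fun j => -(empGrad y X τ β j - g j))
        (fun j => βt j - β j)
      simp only [neg_sq] at hcs
      have he : ∑ j ∈ E, -(empGrad y X τ β j - g j) * (βt j - β j)
          = -∑ j ∈ E, (empGrad y X τ β j - g j) * (βt j - β j) := by
        rw [← Finset.sum_neg_distrib]; exact Finset.sum_congr rfl fun j _ => by ring
      rw [he] at hcs
      calc -∑ j ∈ E, (empGrad y X τ β j - g j) * (βt j - β j)
          ≤ Real.sqrt (∑ j ∈ E, (empGrad y X τ β j - g j) ^ 2)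
            * Real.sqrt (∑ j ∈ E, (βt j - β j) ^ 2) := hcs
        _ ≤ _ := mul_le_mul_of_nonneg_left hsubE (Real.sqrt_nonneg _)
    have hE3 : -∑ j ∈ E, lam j * ξ j * (βt j - β j)
        ≤ Real.sqrt (∑ j ∈ S, lam j ^ 2) * norm2 (fun j => βt j - β j) := by
      have hsd : ∑ j ∈ E \ S, lam j * ξ j * (βt j - β j)
          + ∑ j ∈ S, lam j * ξ j * (βt j - β j)
          = ∑ j ∈ E, lam j * ξ j * (βt j - β j) := Finset.sum_sdiff hSE
      have hES : 0 ≤ ∑ j ∈ E \ S, lam j * ξ j * (βt j - β j) := by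
        apply Finset.sum_nonneg
        intro j hj
        have hjS : j ∉ S := (Finset.mem_sdiff.mp hj).2
        rw [mul_assoc (lam j), hsgn j (hβ j hjS)]
        exact mul_nonneg (hlamnn j) (abs_nonneg _)
      have hS1 : -∑ j ∈ S, lam j * ξ j * (βt j - β j) ≤ ∑ j ∈ S, lam j * |βt j - β j| := by
        rw [← Finset.sum_neg_distrib]
        apply Finset.sum_le_sum
        intro j _
        have h1 : |lam j * ξ j * (βt j - β j)| ≤ lam j * |βt j - β j| := by
          rw [abs_mul, abs_mul, abs_of_nonneg (hlamnn j)]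
          have := mul_le_mul_of_nonneg_right (hξ1 j) (abs_nonneg (βt j - β j))
          nlinarith [hlamnn j, abs_nonneg (βt j - β j), abs_nonneg (ξ j)]
        linarith [neg_abs_le (lam j * ξ j * (βt j - β j))]
      have hS2 : ∑ j ∈ S, lam j * |βt j - β j|
          ≤ Real.sqrt (∑ j ∈ S, lam j ^ 2) * norm2 (fun j => βt j - β j) := by
        have hcs := Statement11Aux.cs S lam (fun j => |βt j - β j|)
        simp only [sq_abs] at hcs
        calc ∑ j ∈ S, lam j * |βt j - β j|
            ≤ Real.sqrt (∑ j ∈ S, lam j ^ 2) * Real.sqrt (∑ j ∈ S, (βt j - β j) ^ 2) := hcs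
          _ ≤ _ := mul_le_mul_of_nonneg_left hsubS (Real.sqrt_nonneg _)
      linarith [hsd, hES, hS1, hS2]
    have hgE : ∑ j, (-g j) * (βt j - β j) ≤ norm2 g * norm2 (fun j => βt j - β j) := by
      have hcs := Statement11Aux.cs Finset.univ (fun j => -g j) (fun j => βt j - β j)
      simp only [neg_sq] at hcs
      simp only [norm2]
      exact hcs
    rw [hTeq, ← hPsplit, hEdec]
    nlinarith [hEc, hE1, hE2, hE3, hgE]
  -- case analysis
  by_cases hcase : norm2 (fun j => βt j - β j) ≤ r
  · rcases eq_or_ne βt β with rfl | hne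
    · have hzero : norm2 (fun j => βt j - βt j) = 0 := by
        simp [norm2]
      rw [hzero]
      exact mul_nonneg hκinv hU0
    · have hrsc := hRSC βt hne hcase hconeδ
      rcases eq_or_lt_of_le hN0 with h0 | h0
      · rw [← h0]
        exact mul_nonneg hκinv hU0
      · have hκN : κ * norm2 (fun j => βt j - β j)
            ≤ Real.sqrt (∑ j ∈ S, lam j ^ 2)
              + Real.sqrt (∑ j ∈ E, (empGrad y X τ β j - g j) ^ 2)
              + Real.sqrt k * ε + norm2 g := by
          nlinarith [hrsc, hT, h0]
        calc norm2 (fun j => βt j - β j)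
            = κ⁻¹ * (κ * norm2 (fun j => βt j - β j)) := by
              field_simp
          _ ≤ _ := mul_le_mul_of_nonneg_left hκN hκinv
  · exfalso
    have hNr : r < norm2 (fun j => βt j - β j) := lt_of_not_ge hcase
    have hpos : 0 < κ⁻¹ * (0.5 * ρ * Real.sqrt k + 2 * Real.sqrt s) * lam0 := by
      apply mul_pos (mul_pos (inv_pos.mpr hκ) ?_) hlam0
      nlinarith [Real.sqrt_nonneg ((k:ℕ):ℝ), hsqs0, hρ]
    have hr0 : 0 < r := lt_trans hpos hr
    have hN0' : 0 < norm2 (fun j => βt j - β j) := lt_trans hr0 hNr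
    have ht0 : 0 < r / norm2 (fun j => βt j - β j) := div_pos hr0 hN0'
    have ht1 : r / norm2 (fun j => βt j - β j) < 1 := (div_lt_one hN0').mpr hNr
    have hfun : (fun j => (β j + (r / norm2 (fun j' => βt j' - β j')) * (βt j - β j)) - β j)
        = (fun j => (r / norm2 (fun j' => βt j' - β j')) * (βt j - β j)) :=
      funext fun j => by ring
    have hn2 : norm2 (fun j => (r / norm2 (fun j' => βt j' - β j')) * (βt j - β j))
        = (r / norm2 (fun j' => βt j' - β j')) * norm2 (fun j => βt j - β j) :=
      Statement11Aux.norm2_smul ht0.le _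
    have hn1 : norm1 (fun j => (r / norm2 (fun j' => βt j' - β j')) * (βt j - β j))
        = (r / norm2 (fun j' => βt j' - β j')) * norm1 (fun j => βt j - β j) :=
      Statement11Aux.norm1_smul ht0.le _
    have htN : (r / norm2 (fun j' => βt j' - β j')) * norm2 (fun j => βt j - β j) = r :=
      div_mul_cancel₀ r hN0'.ne'
    have hne'' : (fun j => β j + (r / norm2 (fun j' => βt j' - β j')) * (βt j - β j)) ≠ β := by
      intro heq
      have hδ0 : ∀ j, βt j - β j = 0 := by
        intro j
        have := congrFun heq j
        have h2 : (r / norm2 (fun j' => βt j' - β j')) * (βt j - β j) = 0 := by linarith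
        rcases mul_eq_zero.mp h2 with h3 | h3
        · exact absurd h3 ht0.ne'
        · exact h3
      have : norm2 (fun j => βt j - β j) = 0 := by
        simp only [norm2]
        rw [Finset.sum_eq_zero (fun j _ => by rw [hδ0 j]; ring)]
        exact Real.sqrt_zero
      linarith
    have hball : norm2 (fun j =>
        (β j + (r / norm2 (fun j' => βt j' - β j')) * (βt j - β j)) - β j) ≤ r := by
      rw [hfun, hn2, htN]
    have hcone'' : norm1 (fun j =>
        (β j + (r / norm2 (fun j' => βt j' - β j')) * (βt j - β j)) - β j)
        ≤ ((2 + 2 / ρ) * Real.sqrt k + (2 / ρ) * Real.sqrt s) * norm2 (fun j =>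
          (β j + (r / norm2 (fun j' => βt j' - β j')) * (βt j - β j)) - β j) := by
      rw [hfun, hn2, hn1]
      have := mul_le_mul_of_nonneg_left hconeδ ht0.le
      nlinarith [this]
    have hrsc := hRSC (fun j => β j + (r / norm2 (fun j' => βt j' - β j')) * (βt j - β j))
      hne'' hball hcone''
    rw [hfun, hn2, htN] at hrsc
    have hsum : ∑ j, (empGrad y X τ
          (fun j' => β j' + (r / norm2 (fun j'' => βt j'' - β j'')) * (βt j' - β j')) j
          - empGrad y X τ β j) * ((r / norm2 (fun j' => βt j' - β j')) * (βt j - β j))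
        = (r / norm2 (fun j' => βt j' - β j')) * ∑ j, (empGrad y X τ
          (fun j' => β j' + (r / norm2 (fun j'' => βt j'' - β j'')) * (βt j' - β j')) j
          - empGrad y X τ β j) * (βt j - β j) := by
      rw [Finset.mul_sum]; exact Finset.sum_congr rfl fun j _ => by ring
    have hray := Statement11Aux.grad_ray y X hτ β (fun j => βt j - β j) ht0.le ht1.le
    have hβteq : (fun j' => β j' + (βt j' - β j')) = βt := funext fun j => by ring
    rw [hβteq] at hray
    have hrw : ∑ j, (empGrad y X τ (fun j' =>
          β j' + (r / norm2 (fun j'' => βt j'' - β j'')) * (βt j' - β j')) j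
          - empGrad y X τ β j) * (βt j - β j)
        ≤ (Real.sqrt (∑ j ∈ S, lam j ^ 2)
          + Real.sqrt (∑ j ∈ E, (empGrad y X τ β j - g j) ^ 2)
          + Real.sqrt k * ε + norm2 g) * norm2 (fun j => βt j - β j) :=
      le_trans hray hT
    have hfinal : κ * r ^ 2 ≤ r * (Real.sqrt (∑ j ∈ S, lam j ^ 2)
        + Real.sqrt (∑ j ∈ E, (empGrad y X τ β j - g j) ^ 2)
        + Real.sqrt k * ε + norm2 g) := by
      have h1 : κ * r ^ 2 ≤ (r / norm2 (fun j' => βt j' - β j'))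
          * ((Real.sqrt (∑ j ∈ S, lam j ^ 2)
          + Real.sqrt (∑ j ∈ E, (empGrad y X τ β j - g j) ^ 2)
          + Real.sqrt k * ε + norm2 g) * norm2 (fun j => βt j - β j)) := by
        calc κ * r ^ 2 ≤ _ := hrsc
          _ = (r / norm2 (fun j' => βt j' - β j')) * ∑ j, (empGrad y X τ (fun j' =>
                β j' + (r / norm2 (fun j'' => βt j'' - β j'')) * (βt j' - β j')) j
                - empGrad y X τ β j) * (βt j - β j) := by
              rw [← hsum]
              exact Finset.sum_congr rfl fun j _ => by ring
          _ ≤ _ := mul_le_mul_of_nonneg_left hrw ht0.le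
      calc κ * r ^ 2 ≤ _ := h1
        _ = ((r / norm2 (fun j' => βt j' - β j')) * norm2 (fun j => βt j - β j))
            * (Real.sqrt (∑ j ∈ S, lam j ^ 2)
            + Real.sqrt (∑ j ∈ E, (empGrad y X τ β j - g j) ^ 2)
            + Real.sqrt k * ε + norm2 g) := by ring
        _ = _ := by rw [htN]
    have hκr : κ * r ≤ Real.sqrt (∑ j ∈ S, lam j ^ 2)
        + Real.sqrt (∑ j ∈ E, (empGrad y X τ β j - g j) ^ 2)
        + Real.sqrt k * ε + norm2 g := by
      nlinarith [hfinal, hr0]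
    have hrU : r ≤ κ⁻¹ * (Real.sqrt (∑ j ∈ S, lam j ^ 2)
        + Real.sqrt (∑ j ∈ E, (empGrad y X τ β j - g j) ^ 2)
        + Real.sqrt k * ε + norm2 g) := by
      calc r = κ⁻¹ * (κ * r) := by field_simp
        _ ≤ _ := mul_le_mul_of_nonneg_left hκr hκinv
    linarith [hrU, hmid, hr]
end
end

section
/- Fix data (y_i,x_i)_{i=1}^n and tau > 0. Let lambda in R^d have nonnegative entries, let phi > 0 and beta_prev in R^d, and let beta_new be a minimizer over R^d of beta |-> F(beta; phi, beta_prev) + ||lambda o beta||_1, where F(beta; phi, beta') = L_hat_tau(beta') + <grad L_hat_tau(beta'), beta - beta'> + (phi/2)*||beta - beta'||_2^2. Assume the local majorization F(beta_new; phi, beta_prev) >= L_hat_tau(beta_new). Then, with Psi(beta) := L_hat_tau(beta) + ||lambda o beta||_1, for every beta in R^d: Psi(beta) - Psi(beta_new) >= (phi/2)*( ||beta - beta_new||_2^2 - ||beta - beta_prev||_2^2 ). -/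
set_option autoImplicit false

open MeasureTheory ProbabilityTheory Filter

noncomputable section

/-- The isotropic quadratic majorant
`F(β; φ, β') = L̂_τ(β') + ⟨∇L̂_τ(β'), β - β'⟩ + (φ/2)‖β - β'‖₂²`. -/
def Fmaj {n d : ℕ} (y : Fin n → ℝ) (X : Fin n → Fin d → ℝ) (τ φ : ℝ)
    (βp β : Fin d → ℝ) : ℝ :=
  empLoss y X τ βp + (∑ j, empGrad y X τ βp j * (β j - βp j)) +
    φ / 2 * (norm2 (fun j => β j - βp j)) ^ 2

/- ### Auxiliary lemmas -/

lemma sign_facts' (b : ℝ) (hb : b ≠ 0) :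
    Real.sign b * b = |b| ∧ (Real.sign b = 1 ∨ Real.sign b = -1) := by
  rcases lt_trichotomy b 0 with h | h | h
  · rw [Real.sign_of_neg h, abs_of_neg h]; exact ⟨by ring, Or.inr rfl⟩
  · exact absurd h hb
  · rw [Real.sign_of_pos h, abs_of_pos h]; exact ⟨by ring, Or.inl rfl⟩

lemma huber_grad_ineq (τ : ℝ) (hτ : 0 < τ) (a b : ℝ) :
    huber τ b + huberDeriv τ b * (a - b) ≤ huber τ a := by
  unfold huber huberDeriv
  have habs : -|a| ≤ a ∧ a ≤ |a| := ⟨neg_abs_le a, le_abs_self a⟩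
  rcases le_or_gt |a| τ with ha | ha <;> rcases le_or_gt |b| τ with hb | hb <;>
    simp only [ha, hb, if_pos, if_neg, not_le, le_refl]
  · nlinarith [sq_nonneg (a - b)]
  · have hbne : b ≠ 0 := by intro h; rw [h] at hb; simp at hb; linarith
    obtain ⟨hs, hs2⟩ := sign_facts' b hbne
    rcases hs2 with h | h <;> rw [h] at hs ⊢ <;>
      nlinarith [sq_nonneg (a - τ), sq_nonneg (a + τ), hs]
  · have h1 : a * b ≤ |a| * |b| := le_trans (le_abs_self _) (abs_mul a b).le
    have h3 : b ^ 2 = |b| ^ 2 := (sq_abs b).symm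
    nlinarith [mul_nonneg (sub_nonneg.2 hb) (by linarith : (0:ℝ) ≤ |a| - (τ + |b|)/2)]
  · have hbne : b ≠ 0 := by intro h; rw [h] at hb; simp at hb; linarith
    obtain ⟨hs, hs2⟩ := sign_facts' b hbne
    rcases hs2 with h | h <;> rw [h] at hs ⊢ <;> nlinarith [hs, habs.1, habs.2]

lemma empLoss_convex {n d : ℕ} (y : Fin n → ℝ) (X : Fin n → Fin d → ℝ) (τ : ℝ)
    (hτ : 0 < τ) (βp β : Fin d → ℝ) :
    empLoss y X τ βp + ∑ j, empGrad y X τ βp j * (β j - βp j) ≤ empLoss y X τ β := by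
  have hswap : ∑ j, empGrad y X τ βp j * (β j - βp j)
      = (n : ℝ)⁻¹ * ∑ i, huberDeriv τ (y i - ∑ j', X i j' * βp j') *
          ((y i - ∑ j, X i j * β j) - (y i - ∑ j, X i j * βp j)) := by
    unfold empGrad
    set D : Fin n → ℝ := fun i => huberDeriv τ (y i - ∑ j', X i j' * βp j') with hD
    set c : ℝ := (n : ℝ)⁻¹ with hc
    calc ∑ j, (-c * ∑ i, D i * X i j) * (β j - βp j)
        = ∑ j, ∑ i, -c * (D i * X i j) * (β j - βp j) := by
          refine Finset.sum_congr rfl fun j _ => ?_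
          rw [Finset.mul_sum, Finset.sum_mul]
      _ = ∑ i, ∑ j, -c * (D i * X i j) * (β j - βp j) := Finset.sum_comm
      _ = c * ∑ i, D i * ((y i - ∑ j, X i j * β j) - (y i - ∑ j, X i j * βp j)) := by
          rw [Finset.mul_sum]
          refine Finset.sum_congr rfl fun i _ => ?_
          have h2 : (y i - ∑ j, X i j * β j) - (y i - ∑ j, X i j * βp j)
              = ∑ j, (X i j * βp j - X i j * β j) := by
            rw [Finset.sum_sub_distrib]; ring
          rw [h2, Finset.mul_sum, Finset.mul_sum]
          exact Finset.sum_congr rfl fun j _ => by ring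
  rw [hswap]
  unfold empLoss
  rw [← mul_add, ← Finset.sum_add_distrib]
  apply mul_le_mul_of_nonneg_left _ (by positivity)
  exact Finset.sum_le_sum fun i _ => huber_grad_ineq τ hτ _ _

/-- Strong-convexity key inequality for the quadratic-plus-ℓ¹ surrogate. -/
lemma strong_conv_key {d : ℕ} (g lam βprev βnew β : Fin d → ℝ) (φ : ℝ)
    (hφ : 0 < φ) (hlam : ∀ j, 0 ≤ lam j)
    (hmin : ∀ b : Fin d → ℝ,
      (∑ j, g j * (βnew j - βprev j)) + φ / 2 * ∑ j, (βnew j - βprev j) ^ 2 +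
          ∑ j, lam j * |βnew j| ≤
        (∑ j, g j * (b j - βprev j)) + φ / 2 * ∑ j, (b j - βprev j) ^ 2 +
          ∑ j, lam j * |b j|) :
    φ / 2 * ∑ j, (β j - βnew j) ^ 2 ≤
      ((∑ j, g j * (β j - βprev j)) + φ / 2 * ∑ j, (β j - βprev j) ^ 2 +
          ∑ j, lam j * |β j|) -
        ((∑ j, g j * (βnew j - βprev j)) + φ / 2 * ∑ j, (βnew j - βprev j) ^ 2 +
          ∑ j, lam j * |βnew j|) := by
  set K : ℝ := ∑ j, (β j - βnew j) ^ 2 with hKdef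
  have hK0 : 0 ≤ K := Finset.sum_nonneg fun j _ => sq_nonneg _
  set D : ℝ := ((∑ j, g j * (β j - βprev j)) + φ / 2 * ∑ j, (β j - βprev j) ^ 2 +
          ∑ j, lam j * |β j|) -
        ((∑ j, g j * (βnew j - βprev j)) + φ / 2 * ∑ j, (βnew j - βprev j) ^ 2 +
          ∑ j, lam j * |βnew j|) with hDdef
  have step : ∀ t : ℝ, 0 < t → t ≤ 1 → φ / 2 * ((1 - t) * K) ≤ D := by
    intro t ht ht1
    set βt : Fin d → ℝ := fun j => βnew j + t * (β j - βnew j) with hβt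
    have hSt : ∑ j, g j * (βt j - βprev j)
        = (1 - t) * ∑ j, g j * (βnew j - βprev j) + t * ∑ j, g j * (β j - βprev j) := by
      rw [Finset.mul_sum, Finset.mul_sum, ← Finset.sum_add_distrib]
      exact Finset.sum_congr rfl fun j _ => by simp only [hβt]; ring
    have hqt : ∑ j, (βt j - βprev j) ^ 2
        = (1 - t) * ∑ j, (βnew j - βprev j) ^ 2 + t * ∑ j, (β j - βprev j) ^ 2
          - t * (1 - t) * K := by
      rw [hKdef, Finset.mul_sum, Finset.mul_sum, Finset.mul_sum,
        ← Finset.sum_add_distrib, ← Finset.sum_sub_distrib]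
      exact Finset.sum_congr rfl fun j _ => by simp only [hβt]; ring
    have hPt : ∑ j, lam j * |βt j|
        ≤ (1 - t) * ∑ j, lam j * |βnew j| + t * ∑ j, lam j * |β j| := by
      rw [Finset.mul_sum, Finset.mul_sum, ← Finset.sum_add_distrib]
      refine Finset.sum_le_sum fun j _ => ?_
      have h1 : |βt j| ≤ (1 - t) * |βnew j| + t * |β j| := by
        have he : βt j = (1 - t) * βnew j + t * β j := by simp only [hβt]; ring
        rw [he]
        calc |(1 - t) * βnew j + t * β j| ≤ |(1 - t) * βnew j| + |t * β j| := abs_add_le _ _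
          _ = (1 - t) * |βnew j| + t * |β j| := by
              rw [abs_mul, abs_mul, abs_of_nonneg (by linarith : (0:ℝ) ≤ 1 - t),
                abs_of_nonneg ht.le]
      nlinarith [hlam j, abs_nonneg (βnew j), abs_nonneg (β j)]
    have hm := hmin βt
    rw [hSt, hqt] at hm
    have ht' : t * (φ / 2 * ((1 - t) * K)) ≤ t * D := by
      rw [hDdef]; nlinarith [hm, hPt]
    exact le_of_mul_le_mul_left ht' ht
  by_contra hcon
  push_neg at hcon
  clear_value K D
  have hD0 : 0 ≤ D := by have h := step 1 one_pos le_rfl; simpa using h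
  have hcK : D < φ / 2 * K := hcon
  set c : ℝ := φ / 2 * K with hcdef
  have hc0 : 0 < c := lt_of_le_of_lt hD0 hcK
  set t : ℝ := (c - D) / (2 * c) with htdef
  have ht : 0 < t := div_pos (by linarith) (by linarith)
  have ht1 : t ≤ 1 := by rw [div_le_one (by linarith)]; linarith
  have h2 := step t ht ht1
  have hct : c * t = (c - D) / 2 := by
    rw [htdef]; field_simp
  have heq : φ / 2 * ((1 - t) * K) = c - c * t := by rw [hcdef]; ring
  rw [heq, hct] at h2
  linarith

/-- Lemma C.2: one LAMM step decreases the penalized objective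
`Ψ` in the stated quantitative sense. -/
theorem statement_13 {n d : ℕ} (y : Fin n → ℝ) (X : Fin n → Fin d → ℝ)
    (τ : ℝ) (hτ : 0 < τ)
    (lam : Fin d → ℝ) (hlam : ∀ j, 0 ≤ lam j)
    (φ : ℝ) (hφ : 0 < φ) (βprev βnew : Fin d → ℝ)
    (hmin : ∀ β : Fin d → ℝ,
      Fmaj y X τ φ βprev βnew + ∑ j, lam j * |βnew j| ≤
        Fmaj y X τ φ βprev β + ∑ j, lam j * |β j|)
    (hmaj : empLoss y X τ βnew ≤ Fmaj y X τ φ βprev βnew) :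
    ∀ β : Fin d → ℝ,
      φ / 2 * ((norm2 (fun j => β j - βnew j)) ^ 2 -
          (norm2 (fun j => β j - βprev j)) ^ 2) ≤
        (empLoss y X τ β + ∑ j, lam j * |β j|) -
          (empLoss y X τ βnew + ∑ j, lam j * |βnew j|) := by
  intro β
  have hn2 : ∀ b : Fin d → ℝ,
      (norm2 (fun j => b j - βprev j)) ^ 2 = ∑ j, (b j - βprev j) ^ 2 := fun b =>
    Real.sq_sqrt (Finset.sum_nonneg fun j _ => sq_nonneg _)
  have hn2' : (norm2 (fun j => β j - βnew j)) ^ 2 = ∑ j, (β j - βnew j) ^ 2 :=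
    Real.sq_sqrt (Finset.sum_nonneg fun j _ => sq_nonneg _)
  have hF : ∀ b : Fin d → ℝ, Fmaj y X τ φ βprev b
      = empLoss y X τ βprev + (∑ j, empGrad y X τ βprev j * (b j - βprev j)) +
        φ / 2 * ∑ j, (b j - βprev j) ^ 2 := by
    intro b; rw [Fmaj, hn2]
  have hmin' : ∀ b : Fin d → ℝ,
      (∑ j, empGrad y X τ βprev j * (βnew j - βprev j)) +
          φ / 2 * ∑ j, (βnew j - βprev j) ^ 2 + ∑ j, lam j * |βnew j| ≤
        (∑ j, empGrad y X τ βprev j * (b j - βprev j)) +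
          φ / 2 * ∑ j, (b j - βprev j) ^ 2 + ∑ j, lam j * |b j| := by
    intro b
    have h := hmin b
    rw [hF βnew, hF b] at h
    linarith
  have key := strong_conv_key (empGrad y X τ βprev) lam βprev βnew β φ hφ hlam hmin'
  have hc1 := empLoss_convex y X τ hτ βprev β
  have hm2 := hmaj
  rw [hF βnew] at hm2
  rw [hn2', hn2 β]
  linarith
end
end

section
/- Fix data (y_i,x_i)_{i=1}^n and tau > 0, let lambda in R^d have nonnegative entries, and set Psi(beta) = L_hat_tau(beta) + ||lambda o beta||_1. Let beta^{(0)} in R^d and, for j = 1,...,k, let phi^{(j)} > 0 and let beta^{(j)} be a minimizer of beta |-> F(beta; phi^{(j)}, beta^{(j-1)}) + ||lambda o beta||_1 satisfying F(beta^{(j)}; phi^{(j)}, beta^{(j-1)}) >= L_hat_tau(beta^{(j)}), where F(beta; phi, beta') = L_hat_tau(beta') + <grad L_hat_tau(beta'), beta - beta'> + (phi/2)*||beta - beta'||_2^2. Let beta_hat be a minimizer of Psi over R^d. Then Psi(beta^{(k)}) - Psi(beta_hat) <= ( max_{1<=j<=k} phi^{(j)} ) / (2k) * ||beta^{(0)}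 - beta_hat||_2^2. -/
set_option autoImplicit false

open MeasureTheory ProbabilityTheory Filter

noncomputable section

/-- Penalized objective `Ψ(β) = L̂_τ(β) + ‖lam ∘ β‖₁`. -/
def Psi {n d : ℕ} (y : Fin n → ℝ) (X : Fin n → Fin d → ℝ) (τ : ℝ)
    (lam : Fin d → ℝ) (β : Fin d → ℝ) : ℝ :=
  empLoss y X τ β + ∑ j, lam j * |β j|

lemma huber_lb {τ : ℝ} (hτ : 0 < τ) (u : ℝ) : τ * |u| - τ^2/2 ≤ huber τ u := by
  unfold huber; split_ifs with h
  · nlinarith [sq_nonneg (|u| - τ), sq_abs u]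
  · exact le_refl _

lemma huber_cvx {τ : ℝ} (hτ : 0 < τ) (v u : ℝ) :
    huber τ v + huberDeriv τ v * (u - v) ≤ huber τ u := by
  unfold huberDeriv
  split_ifs with hv
  · have hhv : huber τ v = v^2/2 := if_pos hv
    rw [hhv]
    unfold huber; split_ifs with hu
    · nlinarith [sq_nonneg (u - v)]
    · push_neg at hu
      have h1 : u * v ≤ |u| * |v| := (le_abs_self _).trans (le_of_eq (abs_mul u v))
      nlinarith [sq_abs v, mul_nonneg (sub_nonneg.mpr hu.le) (sub_nonneg.mpr hv),
        sq_nonneg (τ - |v|)]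
  · push_neg at hv
    have hv0 : v ≠ 0 := by intro h; rw [h, abs_zero] at hv; linarith
    have hs : Real.sign v * v = |v| := by
      rcases hv0.lt_or_gt with h | h
      · rw [Real.sign_of_neg h, abs_of_neg h]; ring
      · rw [Real.sign_of_pos h, abs_of_pos h]; ring
    have hsu : Real.sign v * u ≤ |u| := by
      rcases hv0.lt_or_gt with h | h
      · rw [Real.sign_of_neg h]; simpa using neg_le_abs u
      · rw [Real.sign_of_pos h]; simpa using le_abs_self u
    have hhv : huber τ v = τ*|v| - τ^2/2 := if_neg (not_le.mpr hv)
    rw [hhv]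
    have h2 := huber_lb hτ u
    have h3 : τ * (Real.sign v * u) ≤ τ * |u| := by
      exact mul_le_mul_of_nonneg_left hsu hτ.le
    nlinarith [hs]

lemma empLoss_cvx {n d : ℕ} (y : Fin n → ℝ) (X : Fin n → Fin d → ℝ) {τ : ℝ}
    (hτ : 0 < τ) (a b : Fin d → ℝ) :
    empLoss y X τ a + ∑ j, empGrad y X τ a j * (b j - a j) ≤ empLoss y X τ b := by
  set r : (Fin d → ℝ) → Fin n → ℝ := fun c i => y i - ∑ j, X i j * c j with hr
  have hgrad : ∑ j, empGrad y X τ a j * (b j - a j)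
      = (n:ℝ)⁻¹ * ∑ i, huberDeriv τ (r a i) * (r b i - r a i) := by
    unfold empGrad
    rw [Finset.mul_sum]
    rw [show (∑ j, (-(n : ℝ)⁻¹ * ∑ i, huberDeriv τ (y i - ∑ j', X i j' * a j') * X i j) * (b j - a j))
      = ∑ j, ∑ i, (n:ℝ)⁻¹ * (huberDeriv τ (r a i) * (X i j * (a j - b j))) from
      Finset.sum_congr rfl fun j _ => by
        rw [neg_mul, neg_mul_comm, Finset.mul_sum, Finset.sum_mul]
        exact Finset.sum_congr rfl fun i _ => by ring]
    rw [Finset.sum_comm]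
    refine Finset.sum_congr rfl fun i _ => ?_
    rw [← Finset.mul_sum, ← Finset.mul_sum]
    have : ∑ j, X i j * (a j - b j) = r b i - r a i := by
      simp only [hr, mul_sub, Finset.sum_sub_distrib]; ring
    rw [this]
  rw [hgrad]
  unfold empLoss
  rw [← mul_add, ← Finset.sum_add_distrib]
  apply mul_le_mul_of_nonneg_left _ (by positivity)
  exact Finset.sum_le_sum fun i _ => huber_cvx hτ (r a i) (r b i)

lemma norm2_sq {d : ℕ} (v : Fin d → ℝ) : norm2 v ^ 2 = ∑ j, v j ^ 2 :=
  Real.sq_sqrt (Finset.sum_nonneg fun _ _ => sq_nonneg _)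

lemma fmaj_expand {n d : ℕ} (y : Fin n → ℝ) (X : Fin n → Fin d → ℝ) (τ φ : ℝ)
    (βp a b : Fin d → ℝ) :
    Fmaj y X τ φ βp b = Fmaj y X τ φ βp a
      + (∑ j, (empGrad y X τ βp j + φ * (a j - βp j)) * (b j - a j))
      + φ/2 * ∑ j, (b j - a j)^2 := by
  unfold Fmaj
  rw [norm2_sq, norm2_sq]
  have h1 : ∑ j, empGrad y X τ βp j * (b j - βp j)
      = ∑ j, (empGrad y X τ βp j * (a j - βp j) + empGrad y X τ βp j * (b j - a j)) :=
    Finset.sum_congr rfl fun j _ => by ring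
  have h2 : ∑ j, (b j - βp j)^2
      = ∑ j, ((a j - βp j)^2 + 2 * ((a j - βp j) * (b j - a j)) + (b j - a j)^2) :=
    Finset.sum_congr rfl fun j _ => by ring
  have h3 : ∑ j, (empGrad y X τ βp j + φ * (a j - βp j)) * (b j - a j)
      = ∑ j, (empGrad y X τ βp j * (b j - a j) + φ * ((a j - βp j) * (b j - a j))) :=
    Finset.sum_congr rfl fun j _ => by ring
  rw [h1, h2, h3]
  simp only [Finset.sum_add_distrib]
  rw [← Finset.mul_sum, ← Finset.mul_sum]
  ring

lemma min_strong {n d : ℕ} (y : Fin n → ℝ) (X : Fin n → Fin d → ℝ) (τ : ℝ)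
    {φ : ℝ} (hφ : 0 < φ) (lam : Fin d → ℝ) (hlam : ∀ j, 0 ≤ lam j)
    (βp m : Fin d → ℝ)
    (hm : ∀ b : Fin d → ℝ, Fmaj y X τ φ βp m + ∑ i, lam i * |m i| ≤
        Fmaj y X τ φ βp b + ∑ i, lam i * |b i|)
    (b : Fin d → ℝ) :
    Fmaj y X τ φ βp m + ∑ i, lam i * |m i| + φ/2 * ∑ j, (b j - m j)^2 ≤
      Fmaj y X τ φ βp b + ∑ i, lam i * |b i| := by
  set S : ℝ := ∑ j, (b j - m j)^2 with hS
  have hS0 : 0 ≤ S := Finset.sum_nonneg fun _ _ => sq_nonneg _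
  set A : ℝ := (∑ j, (empGrad y X τ βp j + φ * (m j - βp j)) * (b j - m j))
      + (∑ i, lam i * |b i|) - ∑ i, lam i * |m i| with hA
  have key : ∀ t : ℝ, 0 < t → t ≤ 1 → -(φ/2 * S * t) ≤ A := by
    intro t ht0 ht1
    have h := hm (fun i => m i + t * (b i - m i))
    rw [fmaj_expand y X τ φ βp m (fun i => m i + t * (b i - m i))] at h
    have e1 : ∑ j, (empGrad y X τ βp j + φ * (m j - βp j)) * ((m j + t * (b j - m j)) - m j)
        = t * ∑ j, (empGrad y X τ βp j + φ * (m j - βp j)) * (b j - m j) := by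
      rw [Finset.mul_sum]; exact Finset.sum_congr rfl fun j _ => by ring
    have e2 : ∑ j, ((m j + t * (b j - m j)) - m j)^2 = t^2 * S := by
      rw [hS, Finset.mul_sum]; exact Finset.sum_congr rfl fun j _ => by ring
    rw [e1, e2] at h
    have e3 : ∑ i, lam i * |m i + t * (b i - m i)|
        ≤ (1 - t) * ∑ i, lam i * |m i| + t * ∑ i, lam i * |b i| := by
      rw [Finset.mul_sum, Finset.mul_sum, ← Finset.sum_add_distrib]
      refine Finset.sum_le_sum fun i _ => ?_
      have habs : |m i + t * (b i - m i)| ≤ (1 - t) * |m i| + t * |b i| := by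
        have : m i + t * (b i - m i) = (1 - t) * m i + t * b i := by ring
        rw [this]
        calc |(1 - t) * m i + t * b i| ≤ |(1 - t) * m i| + |t * b i| := abs_add_le _ _
          _ = (1 - t) * |m i| + t * |b i| := by
              rw [abs_mul, abs_mul, abs_of_nonneg (by linarith), abs_of_nonneg ht0.le]
      calc lam i * |m i + t * (b i - m i)| ≤ lam i * ((1 - t) * |m i| + t * |b i|) :=
            mul_le_mul_of_nonneg_left habs (hlam i)
        _ = (1 - t) * (lam i * |m i|) + t * (lam i * |b i|) := by ring
    nlinarith [h, e3]
  have hA0 : 0 ≤ A := by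
    by_contra hc
    push_neg at hc
    rcases eq_or_lt_of_le hS0 with hSz | hSp
    · have := key 1 one_pos le_rfl
      rw [← hSz] at this; simp at this; linarith
    · set t : ℝ := min 1 (-A / (φ * S)) with htdef
      have htA : 0 < -A / (φ * S) := div_pos (by linarith) (by positivity)
      have ht0 : 0 < t := lt_min one_pos htA
      have ht1 : t ≤ 1 := min_le_left _ _
      have h := key t ht0 ht1
      have ht2 : t ≤ -A / (φ * S) := min_le_right _ _
      have : φ/2 * S * t ≤ φ/2 * S * (-A / (φ * S)) := by
        apply mul_le_mul_of_nonneg_left ht2 (by positivity)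
      have heq : φ/2 * S * (-A / (φ * S)) = -A / 2 := by
        field_simp
      nlinarith
  have := fmaj_expand y X τ φ βp m b
  rw [this]
  have hAin := hA0
  rw [hA] at hAin
  linarith

/-- Lemma C.3: sublinear convergence of the LAMM iterates for
the penalized empirical Huber loss. -/
theorem statement_14 {n d : ℕ} (y : Fin n → ℝ) (X : Fin n → Fin d → ℝ)
    (τ : ℝ) (hτ : 0 < τ)
    (lam : Fin d → ℝ) (hlam : ∀ j, 0 ≤ lam j)
    (β : ℕ → Fin d → ℝ) (φ : ℕ → ℝ) (k : ℕ) (hk : 1 ≤ k)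
    (hφ : ∀ j, 1 ≤ j → j ≤ k → 0 < φ j)
    (hmin : ∀ j, 1 ≤ j → j ≤ k → ∀ b : Fin d → ℝ,
      Fmaj y X τ (φ j) (β (j - 1)) (β j) + ∑ i, lam i * |β j i| ≤
        Fmaj y X τ (φ j) (β (j - 1)) b + ∑ i, lam i * |b i|)
    (hmaj : ∀ j, 1 ≤ j → j ≤ k →
      empLoss y X τ (β j) ≤ Fmaj y X τ (φ j) (β (j - 1)) (β j))
    (βh : Fin d → ℝ)
    (hβh : ∀ b : Fin d → ℝ, Psi y X τ lam βh ≤ Psi y X τ lam b) :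
    Psi y X τ lam (β k) - Psi y X τ lam βh ≤
      (Finset.Icc 1 k).sup' (Finset.nonempty_Icc.mpr hk) φ / (2 * k) *
        (norm2 (fun i => β 0 i - βh i)) ^ 2 := by
  have hφmax : ∀ j, 1 ≤ j → j ≤ k →
      φ j ≤ (Finset.Icc 1 k).sup' (Finset.nonempty_Icc.mpr hk) φ :=
    fun j h1 h2 => Finset.le_sup' φ (Finset.mem_Icc.mpr ⟨h1, h2⟩)
  set M := (Finset.Icc 1 k).sup' (Finset.nonempty_Icc.mpr hk) φ with hMdef
  have hM0 : 0 < M := lt_of_lt_of_le (hφ 1 le_rfl hk) (hφmax 1 le_rfl hk)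
  set a : ℕ → ℝ := fun j => ∑ i, (βh i - β j i)^2 with hadef
  set δ : ℕ → ℝ := fun j => Psi y X τ lam (β j) - Psi y X τ lam βh with hδdef
  have hδ0 : ∀ j, 0 ≤ δ j := fun j => sub_nonneg.mpr (hβh (β j))
  have han : ∀ j, 0 ≤ a j := fun j => Finset.sum_nonneg fun _ _ => sq_nonneg _
  have step1 : ∀ j, 1 ≤ j → j ≤ k → δ j ≤ φ j / 2 * (a (j-1) - a j) := by
    intro j h1 h2
    have hstrong := min_strong y X τ (hφ j h1 h2) lam hlam (β (j-1)) (β j)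
      (hmin j h1 h2) βh
    have hmaj' := hmaj j h1 h2
    have hcvx := empLoss_cvx y X hτ (β (j-1)) βh
    have hFβh : Fmaj y X τ (φ j) (β (j-1)) βh
        ≤ empLoss y X τ βh + φ j / 2 * a (j-1) := by
      unfold Fmaj
      rw [norm2_sq]
      have : ∑ i, (βh i - β (j-1) i)^2 = a (j-1) := rfl
      rw [this]
      linarith
    have haj : (∑ i, (βh i - β j i)^2) = a j := rfl
    rw [haj] at hstrong
    simp only [hδdef, Psi] at *
    linarith
  have step2 : ∀ j, 1 ≤ j → j ≤ k → δ j ≤ δ (j-1) := by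
    intro j h1 h2
    have h := hmin j h1 h2 (β (j-1))
    have hFself : Fmaj y X τ (φ j) (β (j-1)) (β (j-1)) = empLoss y X τ (β (j-1)) := by
      unfold Fmaj norm2
      simp
    have hmaj' := hmaj j h1 h2
    simp only [hδdef, Psi] at *
    linarith
  clear_value M a δ
  have amono : ∀ j, 1 ≤ j → j ≤ k → a j ≤ a (j-1) := by
    intro j h1 h2
    have := step1 j h1 h2
    have h0 := hδ0 j
    have hp := hφ j h1 h2
    by_contra hcon
    push_neg at hcon
    have : φ j / 2 * (a (j-1) - a j) < 0 :=
      mul_neg_of_pos_of_neg (half_pos hp) (by linarith)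
    linarith
  have claim : ∀ m, 1 ≤ m → m ≤ k → (m:ℝ) * δ m ≤ M/2 * (a 0 - a m) := by
    intro m h1
    induction m, h1 using Nat.le_induction with
    | base =>
      intro hmk
      have s1 := step1 1 le_rfl hmk
      have hmono := amono 1 le_rfl hmk
      have hle := hφmax 1 le_rfl hmk
      have hp := hφ 1 le_rfl hmk
      push_cast
      nlinarith
    | succ m hm ih =>
      intro hm1k
      have hmk : m ≤ k := le_trans (Nat.le_succ m) hm1k
      have ih' := ih hmk
      have h1' : 1 ≤ m + 1 := by omega
      have s1 := step1 (m+1) h1' hm1k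
      have s2 := step2 (m+1) h1' hm1k
      have hmono := amono (m+1) h1' hm1k
      have hle := hφmax (m+1) h1' hm1k
      have hp := hφ (m+1) h1' hm1k
      have hsub : (m + 1) - 1 = m := rfl
      rw [hsub] at s1 s2 hmono
      have hd1 : δ (m+1) ≤ M/2 * (a m - a (m+1)) := by nlinarith
      have hd2 : (m:ℝ) * δ (m+1) ≤ (m:ℝ) * δ m :=
        mul_le_mul_of_nonneg_left s2 (Nat.cast_nonneg m)
      push_cast
      push_cast at ih'
      have hexp : ((m:ℝ) + 1) * δ (m+1) = (m:ℝ) * δ (m+1) + δ (m+1) := by ring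
      linarith
  have hc := claim k hk le_rfl
  have ha0 : (norm2 (fun i => β 0 i - βh i)) ^ 2 = a 0 := by
    rw [norm2_sq, hadef]
    exact Finset.sum_congr rfl fun i _ => by ring
  have hkpos : (0:ℝ) < k := by exact_mod_cast Nat.lt_of_lt_of_le Nat.zero_lt_one hk
  have hgoal : Psi y X τ lam (β k) - Psi y X τ lam βh = δ k := by rw [hδdef]
  rw [hgoal]
  rw [ha0, div_mul_eq_mul_div, le_div_iff₀ (by positivity)]
  have hak := han k
  have h1 : δ k * (2 * (k:ℝ)) = 2 * ((k:ℝ) * δ k) := by ring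
  have h2 : 0 ≤ M * a k := mul_nonneg hM0.le hak
  linarith
end
end
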